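/- arXiv:1403.1424 — 8 statements merged into one kernel-verified Lean document; each statement's English description precedes it below -/
import Mathlib

section
/- (Golden–Thompson inequality) For Hermitian matrices A and B of the same size, Tr(e^{A+B}) ≤ Tr(e^A e^B). -/
open Matrix
open scoped ComplexOrder

noncomputable def matLog {n : Type*} [Fintype n] [DecidableEq n] (A : Matrix n n ℂ) : Matrix n n ℂ :=
  cfc Real.log A

noncomputable def msqrt {n : Type*} [Fintype n] [DecidableEq n] (A : Matrix n n ℂ) : Matrix n n ℂ :=
  cfc Real.sqrt A

noncomputable def mexp {n : Type*} [Fintype n] [DecidableEq n] (A : Matrix n n ℂ) : Matrix n n ℂ :=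
  NormedSpace.exp A

/-- trace norm ‖A‖₁ = Tr √(AᴴA) -/
noncomputable def traceNorm {n : Type*} [Fintype n] [DecidableEq n] (A : Matrix n n ℂ) : ℝ :=
  (msqrt (Aᴴ * A)).trace.re

/-- Hilbert–Schmidt norm ‖A‖₂ = √Tr(AᴴA) -/
noncomputable def hsNorm {n : Type*} [Fintype n] [DecidableEq n] (A : Matrix n n ℂ) : ℝ :=
  Real.sqrt ((Aᴴ * A).trace.re)

/-- von Neumann entropy S(ρ) = −Tr(ρ log ρ) -/
noncomputable def vnEnt {n : Type*} [Fintype n] [DecidableEq n] (ρ : Matrix n n ℂ) : ℝ :=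
  -((ρ * matLog ρ).trace.re)


namespace GTaux

set_option linter.unusedSectionVars false
set_option linter.unreachableTactic false
set_option linter.unusedTactic false
set_option maxHeartbeats 1000000

section Core

variable {n : Type*} [Fintype n] [DecidableEq n]

local notation "Mat" => Matrix n n ℂ

lemma mul_pow_shift (X Y : Mat) (k : ℕ) : Y * (X * Y) ^ k = (Y * X) ^ k * Y := by
  induction k with
  | zero => simp
  | succ k ih =>
    rw [pow_succ, ← mul_assoc, ih, pow_succ, mul_assoc, mul_assoc, mul_assoc]

lemma trace_pow_mul_comm (X Y : Mat) {r : ℕ} (hr : r ≠ 0) :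
    ((X * Y) ^ r).trace = ((Y * X) ^ r).trace := by
  obtain ⟨s, rfl⟩ := Nat.exists_eq_succ_of_ne_zero hr
  rw [pow_succ', mul_assoc, Matrix.trace_mul_comm, mul_pow_shift, mul_assoc, ← pow_succ]

lemma trace_conjTranspose_mul (X Y : Mat) :
    (Xᴴ * Y).trace = ∑ i, ∑ j, (starRingEnd ℂ) (X j i) * Y j i := by
  simp [Matrix.trace, Matrix.mul_apply, Matrix.conjTranspose_apply, Matrix.diag]

lemma reTr_ctm_eq (X : Mat) :
    (Xᴴ * X).trace.re = ∑ i, ∑ j, ‖X j i‖ ^ 2 := by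
  rw [trace_conjTranspose_mul, Complex.re_sum]
  refine Finset.sum_congr rfl fun i _ => ?_
  rw [Complex.re_sum]
  refine Finset.sum_congr rfl fun j _ => ?_
  rw [mul_comm, Complex.mul_conj, ← Complex.sq_norm, Complex.ofReal_re]

lemma reTr_ctm_nonneg (X : Mat) : 0 ≤ (Xᴴ * X).trace.re := by
  rw [reTr_ctm_eq]
  positivity

noncomputable def n2 (X : Mat) : ℝ := Real.sqrt ((Xᴴ * X).trace.re)

lemma n2_nonneg (X : Mat) : 0 ≤ n2 X := Real.sqrt_nonneg _

lemma n2_sq (X : Mat) : n2 X ^ 2 = (Xᴴ * X).trace.re := Real.sq_sqrt (reTr_ctm_nonneg X)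

lemma n2_eq_of (X Y : Mat) (h : (Xᴴ * X).trace.re = (Yᴴ * Y).trace.re) : n2 X = n2 Y := by
  unfold n2; rw [h]

lemma n2_le_of_sq_le_sq {X Y : Mat} (h : n2 X ^ 2 ≤ n2 Y ^ 2) : n2 X ≤ n2 Y := by
  nlinarith [n2_nonneg X, n2_nonneg Y]

lemma cs (X Y : Mat) : |((Xᴴ * Y).trace.re)| ≤ n2 X * n2 Y := by
  have habs : |((Xᴴ * Y).trace.re)| ≤ ∑ i, ∑ j, ‖X j i‖ * ‖Y j i‖ := by
    rw [trace_conjTranspose_mul]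
    calc |(∑ i, ∑ j, (starRingEnd ℂ) (X j i) * Y j i).re|
        ≤ ‖∑ i, ∑ j, (starRingEnd ℂ) (X j i) * Y j i‖ := Complex.abs_re_le_norm _
      _ ≤ ∑ i, ∑ j, ‖X j i‖ * ‖Y j i‖ := by
          refine (norm_sum_le _ _).trans ?_
          refine Finset.sum_le_sum fun i _ => ?_
          refine (norm_sum_le _ _).trans ?_
          refine Finset.sum_le_sum fun j _ => ?_
          rw [norm_mul, Complex.norm_conj]
  refine habs.trans ?_
  have hcs : (∑ p : n × n, ‖X p.2 p.1‖ * ‖Y p.2 p.1‖) ^ 2 ≤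
      (∑ p : n × n, ‖X p.2 p.1‖ ^ 2) * (∑ p : n × n, ‖Y p.2 p.1‖ ^ 2) :=
    Finset.sum_mul_sq_le_sq_mul_sq _ _ _
  have e1 : ∑ i, ∑ j, ‖X j i‖ * ‖Y j i‖
      = ∑ p : n × n, ‖X p.2 p.1‖ * ‖Y p.2 p.1‖ := by
    rw [← Finset.sum_product']; rfl
  have e2 : (Xᴴ * X).trace.re = ∑ p : n × n, ‖X p.2 p.1‖ ^ 2 := by
    rw [reTr_ctm_eq, ← Finset.sum_product']; rfl
  have e3 : (Yᴴ * Y).trace.re = ∑ p : n × n, ‖Y p.2 p.1‖ ^ 2 := by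
    rw [reTr_ctm_eq, ← Finset.sum_product']; rfl
  rw [e1]
  have h2 : (0:ℝ) ≤ ∑ p : n × n, ‖X p.2 p.1‖ * ‖Y p.2 p.1‖ := by
    positivity
  have := Real.sqrt_le_sqrt hcs
  rw [Real.sqrt_sq h2, Real.sqrt_mul (by positivity)] at this
  refine this.trans ?_
  unfold n2
  rw [e2, e3]

lemma reTr_mul_self_le (Z : Mat) : (Z * Z).trace.re ≤ n2 Z ^ 2 := by
  have h1 : (Z * Z).trace.re = (((Zᴴ)ᴴ) * Z).trace.re := by rw [conjTranspose_conjTranspose]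
  have h2 : n2 (Zᴴ) = n2 Z := by
    refine n2_eq_of _ _ ?_
    rw [conjTranspose_conjTranspose, Matrix.trace_mul_comm]
  calc (Z * Z).trace.re ≤ |(((Zᴴ)ᴴ) * Z).trace.re| := by rw [← h1]; exact le_abs_self _
    _ ≤ n2 (Zᴴ) * n2 Z := cs _ _
    _ = n2 Z ^ 2 := by rw [h2, sq]

lemma n2_herm_pow_sq {P : Mat} (hP : Pᴴ = P) (m : ℕ) :
    n2 (P ^ m) ^ 2 = (P ^ (m * 2)).trace.re := by
  rw [n2_sq, conjTranspose_pow, hP, ← pow_add, ← mul_two]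

lemma hpow (Z : Mat) (j : ℕ) : Z ^ 2 ^ (j + 1) = (Z * Z) ^ 2 ^ j := by
  rw [pow_succ', pow_mul, pow_two]

lemma hpow2 (Z : Mat) (j : ℕ) : Z ^ 2 ^ (j + 1) = Z ^ (2 ^ j * 2) := by
  rw [pow_succ]

lemma main (j : ℕ) :
    (∀ X : Mat, n2 ((X * X) ^ 2 ^ j) ≤ n2 ((Xᴴ * X) ^ 2 ^ j)) ∧
    ∀ S T : Mat, Sᴴ = S → Tᴴ = T → n2 ((S * T) ^ 2 ^ j) ≤ n2 (S ^ 2 ^ j * T ^ 2 ^ j) := by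
  induction j with
  | zero =>
    constructor
    · intro X
      refine n2_le_of_sq_le_sq ?_
      rw [pow_zero, pow_one, pow_one, n2_sq, n2_sq]
      have e1 : ((X * X)ᴴ * (X * X)).trace = ((Xᴴ * X) * (X * Xᴴ)).trace := by
        have h1 : (X * X)ᴴ * (X * X) = Xᴴ * (Xᴴ * (X * X)) := by
          rw [conjTranspose_mul]; noncomm_ring
        have h2 : (Xᴴ * (X * X)) * Xᴴ = (Xᴴ * X) * (X * Xᴴ) := by noncomm_ring
        rw [h1, Matrix.trace_mul_comm, h2]
      have e2 : n2 (X * Xᴴ) = n2 (Xᴴ * X) := by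
        refine n2_eq_of _ _ ?_
        have h3 : (X * Xᴴ)ᴴ * (X * Xᴴ) = (X * Xᴴ) ^ 2 := by
          rw [conjTranspose_mul, conjTranspose_conjTranspose, pow_two]
        have h4 : (Xᴴ * X)ᴴ * (Xᴴ * X) = (Xᴴ * X) ^ 2 := by
          rw [conjTranspose_mul, conjTranspose_conjTranspose, pow_two]
        rw [h3, h4, trace_pow_mul_comm X Xᴴ two_ne_zero]
      have e3 : ((Xᴴ * X) * (X * Xᴴ)).trace.re = ((Xᴴ * X)ᴴ * (X * Xᴴ)).trace.re := by
        rw [conjTranspose_mul, conjTranspose_conjTranspose]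
      calc ((X * X)ᴴ * (X * X)).trace.re
          = ((Xᴴ * X)ᴴ * (X * Xᴴ)).trace.re := by rw [e1, e3]
        _ ≤ |((Xᴴ * X)ᴴ * (X * Xᴴ)).trace.re| := le_abs_self _
        _ ≤ n2 (Xᴴ * X) * n2 (X * Xᴴ) := cs _ _
        _ = n2 (Xᴴ * X) ^ 2 := by rw [e2, sq]
        _ = ((Xᴴ * X)ᴴ * (Xᴴ * X)).trace.re := n2_sq _
    · intro S T _ _
      rw [pow_zero, pow_one, pow_one, pow_one]
  | succ j ih =>
    obtain ⟨G, ML⟩ := ih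
    have hG : ∀ X : Mat, n2 ((X * X) ^ 2 ^ (j+1)) ≤ n2 ((Xᴴ * X) ^ 2 ^ (j+1)) := by
      intro X
      set p := 2 ^ j with hp
      have hVH : (Xᴴ * X)ᴴ = Xᴴ * X := by rw [conjTranspose_mul, conjTranspose_conjTranspose]
      have hUH : (X * Xᴴ)ᴴ = X * Xᴴ := by rw [conjTranspose_mul, conjTranspose_conjTranspose]
      have hPH : ((X * X)ᴴ * (X * X))ᴴ = (X * X)ᴴ * (X * X) := by
        rw [conjTranspose_mul, conjTranspose_conjTranspose]
      refine n2_le_of_sq_le_sq ?_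
      have g2 : n2 ((X * X) ^ 2 ^ (j+1)) ≤ n2 (((X * X)ᴴ * (X * X)) ^ p) := by
        rw [hpow]; exact G (X * X)
      have g3 : n2 (((X * X)ᴴ * (X * X)) ^ p) ^ 2
          = ((((X * X)ᴴ * (X * X))) ^ (p * 2)).trace.re := n2_herm_pow_sq hPH p
      have g4 : ((((X * X)ᴴ * (X * X))) ^ (p * 2)).trace
          = (((Xᴴ * X) * (X * Xᴴ)) ^ (p * 2)).trace := by
        have h1 : (X * X)ᴴ * (X * X) = Xᴴ * (Xᴴ * (X * X)) := by
          rw [conjTranspose_mul]; noncomm_ring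
        have h2 : (Xᴴ * (X * X)) * Xᴴ = (Xᴴ * X) * (X * Xᴴ) := by noncomm_ring
        rw [h1, trace_pow_mul_comm Xᴴ (Xᴴ * (X * X)) (Nat.mul_ne_zero (pow_ne_zero _ two_ne_zero) two_ne_zero), h2]
      have g5 : (((Xᴴ * X) * (X * Xᴴ)) ^ (p * 2)).trace.re
          ≤ n2 (((Xᴴ * X) * (X * Xᴴ)) ^ p) ^ 2 := by
        rw [pow_mul, pow_two]
        exact reTr_mul_self_le _
      have g6 : n2 (((Xᴴ * X) * (X * Xᴴ)) ^ p) ≤ n2 ((Xᴴ * X) ^ p * (X * Xᴴ) ^ p) :=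
        ML _ _ hVH hUH
      have g7 : n2 ((Xᴴ * X) ^ p * (X * Xᴴ) ^ p) ^ 2
          = ((Xᴴ * X) ^ (p * 2) * (X * Xᴴ) ^ (p * 2)).trace.re := by
        rw [n2_sq]
        have h1 : ((Xᴴ * X) ^ p * (X * Xᴴ) ^ p)ᴴ = (X * Xᴴ) ^ p * (Xᴴ * X) ^ p := by
          rw [conjTranspose_mul, conjTranspose_pow, conjTranspose_pow, hVH, hUH]
        rw [h1]
        have h2 : (X * Xᴴ) ^ p * (Xᴴ * X) ^ p * ((Xᴴ * X) ^ p * (X * Xᴴ) ^ p)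
            = (X * Xᴴ) ^ p * ((Xᴴ * X) ^ (p * 2) * (X * Xᴴ) ^ p) := by
          rw [pow_mul, pow_two]; noncomm_ring
        rw [h2, Matrix.trace_mul_comm, mul_assoc, ← pow_add, ← mul_two]
      have g8 : ((Xᴴ * X) ^ (p * 2) * (X * Xᴴ) ^ (p * 2)).trace.re
          ≤ n2 ((Xᴴ * X) ^ (p * 2)) * n2 ((X * Xᴴ) ^ (p * 2)) := by
        have h1 : ((Xᴴ * X) ^ (p * 2) * (X * Xᴴ) ^ (p * 2)).trace.re
            = ((((Xᴴ * X) ^ (p * 2))ᴴ) * (X * Xᴴ) ^ (p * 2)).trace.re := by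
          rw [conjTranspose_pow, hVH]
        rw [h1]
        exact (le_abs_self _).trans (cs _ _)
      have g9 : n2 ((X * Xᴴ) ^ (p * 2)) = n2 ((Xᴴ * X) ^ (p * 2)) := by
        refine n2_eq_of _ _ ?_
        rw [conjTranspose_pow, hUH, conjTranspose_pow, hVH, ← pow_add, ← pow_add,
          trace_pow_mul_comm X Xᴴ (by positivity)]
      calc n2 ((X * X) ^ 2 ^ (j+1)) ^ 2
          ≤ n2 (((X * X)ᴴ * (X * X)) ^ p) ^ 2 := by
            exact pow_le_pow_left₀ (n2_nonneg _) g2 2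
        _ = (((Xᴴ * X) * (X * Xᴴ)) ^ (p * 2)).trace.re := by rw [g3, g4]
        _ ≤ n2 (((Xᴴ * X) * (X * Xᴴ)) ^ p) ^ 2 := g5
        _ ≤ n2 ((Xᴴ * X) ^ p * (X * Xᴴ) ^ p) ^ 2 := pow_le_pow_left₀ (n2_nonneg _) g6 2
        _ = ((Xᴴ * X) ^ (p * 2) * (X * Xᴴ) ^ (p * 2)).trace.re := g7
        _ ≤ n2 ((Xᴴ * X) ^ (p * 2)) * n2 ((X * Xᴴ) ^ (p * 2)) := g8
        _ = n2 ((Xᴴ * X) ^ (p * 2)) ^ 2 := by rw [g9, sq]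
        _ = n2 ((Xᴴ * X) ^ 2 ^ (j+1)) ^ 2 := by rw [hpow2]
    refine ⟨hG, ?_⟩
    intro S T hS hT
    set p := 2 ^ j with hp
    have hSS : (S * S)ᴴ = S * S := by rw [conjTranspose_mul, hS]
    have hTT : (T * T)ᴴ = T * T := by rw [conjTranspose_mul, hT]
    have hWH : ((S * T)ᴴ * (S * T))ᴴ = (S * T)ᴴ * (S * T) := by
      rw [conjTranspose_mul, conjTranspose_conjTranspose]
    refine n2_le_of_sq_le_sq ?_
    have m2 : n2 ((S * T) ^ 2 ^ (j+1)) ≤ n2 (((S * T)ᴴ * (S * T)) ^ p) := by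
      rw [hpow]; exact G (S * T)
    have m3 : n2 (((S * T)ᴴ * (S * T)) ^ p) ^ 2
        = (((S * T)ᴴ * (S * T)) ^ (p * 2)).trace.re := n2_herm_pow_sq hWH p
    have m4 : (((S * T)ᴴ * (S * T)) ^ (p * 2)).trace
        = (((S * S) * (T * T)) ^ (p * 2)).trace := by
      have h1 : (S * T)ᴴ * (S * T) = (T * (S * S)) * T := by
        rw [conjTranspose_mul, hS, hT]; noncomm_ring
      have h2 : T * (T * (S * S)) = (T * T) * (S * S) := by noncomm_ring
      rw [h1, trace_pow_mul_comm (T * (S * S)) T (by positivity), h2,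
        trace_pow_mul_comm (T * T) (S * S) (by positivity)]
    have m5 : (((S * S) * (T * T)) ^ (p * 2)).trace.re
        ≤ n2 (((S * S) * (T * T)) ^ p) ^ 2 := by
      rw [pow_mul, pow_two]
      exact reTr_mul_self_le _
    have m6 : n2 (((S * S) * (T * T)) ^ p) ≤ n2 ((S * S) ^ p * (T * T) ^ p) :=
      ML _ _ hSS hTT
    calc n2 ((S * T) ^ 2 ^ (j+1)) ^ 2
        ≤ n2 (((S * T)ᴴ * (S * T)) ^ p) ^ 2 := pow_le_pow_left₀ (n2_nonneg _) m2 2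
      _ = (((S * S) * (T * T)) ^ (p * 2)).trace.re := by rw [m3, m4]
      _ ≤ n2 (((S * S) * (T * T)) ^ p) ^ 2 := m5
      _ ≤ n2 ((S * S) ^ p * (T * T) ^ p) ^ 2 := pow_le_pow_left₀ (n2_nonneg _) m6 2
      _ = n2 (S ^ 2 ^ (j+1) * T ^ 2 ^ (j+1)) ^ 2 := by
          rw [hpow S j, hpow T j]

lemma key (k : ℕ) (S T : Mat) (hS : Sᴴ = S) (hT : Tᴴ = T) :
    ((S * T) ^ 2 ^ (k+1)).trace.re ≤ (S ^ 2 ^ (k+1) * T ^ 2 ^ (k+1)).trace.re := by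
  obtain ⟨-, ML⟩ := main (n := n) k
  set p := 2 ^ k with hp
  have h1 : ((S * T) ^ 2 ^ (k+1)).trace.re = (((S * T) ^ p) * ((S * T) ^ p)).trace.re := by
    rw [hpow2, pow_mul, pow_two]
  have h2 : (((S * T) ^ p) * ((S * T) ^ p)).trace.re ≤ n2 ((S * T) ^ p) ^ 2 :=
    reTr_mul_self_le _
  have h3 : n2 ((S * T) ^ p) ≤ n2 (S ^ p * T ^ p) := ML S T hS hT
  have h4 : n2 (S ^ p * T ^ p) ^ 2 = (S ^ 2 ^ (k+1) * T ^ 2 ^ (k+1)).trace.re := by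
    rw [n2_sq]
    have e1 : (S ^ p * T ^ p)ᴴ = T ^ p * S ^ p := by
      rw [conjTranspose_mul, conjTranspose_pow, conjTranspose_pow, hS, hT]
    rw [e1]
    have e2 : T ^ p * S ^ p * (S ^ p * T ^ p) = T ^ p * (S ^ 2 ^ (k+1) * T ^ p) := by
      rw [hpow2, pow_mul, pow_two]; noncomm_ring
    rw [e2, Matrix.trace_mul_comm]
    congr 1
    rw [hpow2 T k, pow_mul, pow_two]
    noncomm_ring
  calc ((S * T) ^ 2 ^ (k+1)).trace.re
      ≤ n2 ((S * T) ^ p) ^ 2 := by rw [h1]; exact h2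
    _ ≤ n2 (S ^ p * T ^ p) ^ 2 := pow_le_pow_left₀ (n2_nonneg _) h3 2
    _ = _ := h4


end Core

section Analysis

variable {n : Type*} [Fintype n] [DecidableEq n] [Nonempty n]

local notation "Mat" => Matrix n n ℂ

attribute [local instance] Matrix.linftyOpNormedRing Matrix.linftyOpNormedAlgebra
  Matrix.linfty_opNormOneClass

lemma norm_term_le (x : Mat) (k : ℕ) :
    ‖((k.factorial :ℂ))⁻¹ • x ^ k‖ ≤ ‖x‖ ^ k / k.factorial := by
  rw [norm_smul, norm_inv]
  have h1 : ‖((k.factorial : ℕ) : ℂ)‖ = (k.factorial : ℝ) := by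
    simp
  rw [h1, inv_mul_eq_div, div_le_div_iff₀ (by positivity) (by positivity)]
  have h2 : (0:ℝ) < (k.factorial : ℝ) := by exact_mod_cast Nat.factorial_pos k
  have := norm_pow_le x k
  nlinarith [norm_nonneg (x ^ k), pow_nonneg (norm_nonneg x) k]

lemma norm_exp_le (x : Mat) : ‖NormedSpace.exp x‖ ≤ Real.exp ‖x‖ := by
  have e0 : NormedSpace.exp x = ∑' k : ℕ, ((k.factorial : ℂ))⁻¹ • x ^ k :=
    congrFun (NormedSpace.exp_eq_tsum ℂ) x
  rw [e0]
  refine (norm_tsum_le_tsum_norm (NormedSpace.norm_expSeries_summable' (𝕂 := ℂ) x)).trans ?_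
  have hs : Summable (fun k : ℕ => ‖x‖ ^ k / k.factorial) := Real.summable_pow_div_factorial _
  calc ∑' k : ℕ, ‖((k.factorial :ℂ))⁻¹ • x ^ k‖
      ≤ ∑' k : ℕ, ‖x‖ ^ k / k.factorial :=
        Summable.tsum_le_tsum (fun k => norm_term_le x k)
          (NormedSpace.norm_expSeries_summable' (𝕂 := ℂ) x) hs
    _ = Real.exp ‖x‖ := by
        rw [Real.exp_eq_exp_ℝ, NormedSpace.exp_eq_tsum ℝ]
        refine tsum_congr fun k => ?_
        rw [smul_eq_mul, inv_mul_eq_div]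

lemma exp_remainder (x : Mat) :
    ‖NormedSpace.exp x - 1 - x‖ ≤ ‖x‖ ^ 2 * Real.exp ‖x‖ := by
  have hsum := NormedSpace.expSeries_summable' (𝕂 := ℂ) x
  have hsum1 : Summable fun k : ℕ => ((k+1).factorial : ℂ)⁻¹ • x ^ (k+1) :=
    (summable_nat_add_iff 1).mpr hsum
  have hsum2 : Summable fun k : ℕ => ((k+2).factorial : ℂ)⁻¹ • x ^ (k+2) :=
    (summable_nat_add_iff 2).mpr hsum
  have hrem : NormedSpace.exp x - 1 - x = ∑' k : ℕ, ((k+2).factorial : ℂ)⁻¹ • x ^ (k+2) := by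
    have e0 : NormedSpace.exp x = ∑' k : ℕ, ((k.factorial : ℂ))⁻¹ • x ^ k :=
      congrFun (NormedSpace.exp_eq_tsum ℂ) x
    rw [e0]
    erw [Summable.tsum_eq_zero_add hsum, Summable.tsum_eq_zero_add hsum1]
    norm_num
  rw [hrem]
  have hnorm2 : Summable fun k : ℕ => ‖((k+2).factorial : ℂ)⁻¹ • x ^ (k+2)‖ :=
    (summable_nat_add_iff 2).mpr (NormedSpace.norm_expSeries_summable' (𝕂 := ℂ) x)
  refine (norm_tsum_le_tsum_norm hnorm2).trans ?_
  have hs : Summable (fun k : ℕ => ‖x‖ ^ 2 * (‖x‖ ^ k / k.factorial)) :=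
    (Real.summable_pow_div_factorial _).mul_left _
  calc ∑' k : ℕ, ‖((k+2).factorial : ℂ)⁻¹ • x ^ (k+2)‖
      ≤ ∑' k : ℕ, ‖x‖ ^ 2 * (‖x‖ ^ k / k.factorial) := by
        refine Summable.tsum_le_tsum (fun k => ?_) hnorm2 hs
        refine (norm_term_le x (k+2)).trans ?_
        have h1 : ‖x‖ ^ (k+2) / (((k+2).factorial : ℕ) : ℝ) ≤ ‖x‖ ^ (k+2) / ((k.factorial : ℕ) : ℝ) := by
          gcongr
          omega
        refine h1.trans (le_of_eq ?_)
        rw [pow_add]; ring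
    _ = ‖x‖ ^ 2 * Real.exp ‖x‖ := by
        rw [tsum_mul_left]
        congr 1
        rw [Real.exp_eq_exp_ℝ, NormedSpace.exp_eq_tsum ℝ]
        refine tsum_congr fun k => ?_
        rw [smul_eq_mul, inv_mul_eq_div]

lemma pow_telescope {P Q : Mat} {C : ℝ} (hC : 0 ≤ C) (hP : ‖P‖ ≤ C) (hQ : ‖Q‖ ≤ C) :
    ∀ m : ℕ, ‖P ^ m - Q ^ m‖ ≤ m * C ^ (m - 1) * ‖P - Q‖ := by
  intro m
  induction m with
  | zero => simp
  | succ m ih =>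
    have key : P ^ (m+1) - Q ^ (m+1) = P ^ m * (P - Q) + (P ^ m - Q ^ m) * Q := by
      noncomm_ring
    rw [key]
    have h1 : ‖P ^ m * (P - Q)‖ ≤ C ^ m * ‖P - Q‖ := by
      refine (norm_mul_le _ _).trans ?_
      exact mul_le_mul_of_nonneg_right ((norm_pow_le P m).trans (pow_le_pow_left₀ (norm_nonneg _) hP m)) (norm_nonneg _)
    have h2 : ‖(P ^ m - Q ^ m) * Q‖ ≤ (m * C ^ (m - 1) * ‖P - Q‖) * C := by
      refine (norm_mul_le _ _).trans ?_
      exact mul_le_mul ih hQ (norm_nonneg _) (by positivity)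
    refine (norm_add_le _ _).trans ?_
    have hCpow : (m : ℝ) * C ^ (m - 1) * ‖P - Q‖ * C ≤ m * C ^ m * ‖P - Q‖ := by
      rcases Nat.eq_zero_or_pos m with rfl | hm
      · simp
      · have hc : C ^ (m - 1) * C = C ^ m := by
          rw [← pow_succ, Nat.sub_add_cancel hm]
        calc (m : ℝ) * C ^ (m - 1) * ‖P - Q‖ * C = (m:ℝ) * (C ^ (m-1) * C) * ‖P - Q‖ := by ring
          _ = (m:ℝ) * C ^ m * ‖P - Q‖ := by rw [hc]
          _ ≤ (m:ℝ) * C ^ m * ‖P - Q‖ := le_rfl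
    calc ‖P ^ m * (P - Q)‖ + ‖(P ^ m - Q ^ m) * Q‖
        ≤ C ^ m * ‖P - Q‖ + m * C ^ (m - 1) * ‖P - Q‖ * C := add_le_add h1 h2
      _ ≤ C ^ m * ‖P - Q‖ + m * C ^ m * ‖P - Q‖ := by linarith
      _ = (m + 1 : ℕ) * C ^ ((m + 1) - 1) * ‖P - Q‖ := by
          simp only [Nat.add_sub_cancel]
          push_cast
          ring

lemma trotter_step (x y : Mat) :
    ‖NormedSpace.exp x * NormedSpace.exp y - NormedSpace.exp (x + y)‖
      ≤ (‖x‖ + ‖y‖) ^ 2 * (4 + (‖x‖ + ‖y‖)) * Real.exp (‖x‖ + ‖y‖) := by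
  set Ex := NormedSpace.exp x
  set Ey := NormedSpace.exp y
  set Exy := NormedSpace.exp (x + y)
  have hid : Ex * Ey - Exy
      = (Ex - 1 - x) * Ey + (Ey - 1 - y) + x * (Ey - 1 - y) + x * y - (Exy - 1 - (x + y)) := by
    noncomm_ring
  have hx := norm_nonneg x
  have hy := norm_nonneg y
  have hex : ‖Ex - 1 - x‖ ≤ ‖x‖ ^ 2 * Real.exp ‖x‖ := exp_remainder x
  have hey : ‖Ey - 1 - y‖ ≤ ‖y‖ ^ 2 * Real.exp ‖y‖ := exp_remainder y
  have hexy : ‖Exy - 1 - (x + y)‖ ≤ ‖x + y‖ ^ 2 * Real.exp ‖x + y‖ := exp_remainder (x + y)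
  have hEy : ‖Ey‖ ≤ Real.exp ‖y‖ := norm_exp_le y
  have hxy : ‖x + y‖ ≤ ‖x‖ + ‖y‖ := norm_add_le x y
  have he1 : Real.exp ‖x‖ ≤ Real.exp (‖x‖ + ‖y‖) := Real.exp_le_exp.mpr (by linarith)
  have he2 : Real.exp ‖y‖ ≤ Real.exp (‖x‖ + ‖y‖) := Real.exp_le_exp.mpr (by linarith)
  have he3 : Real.exp ‖x + y‖ ≤ Real.exp (‖x‖ + ‖y‖) := Real.exp_le_exp.mpr hxy
  have he0 : (1:ℝ) ≤ Real.exp (‖x‖ + ‖y‖) := by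
    rw [← Real.exp_zero]; exact Real.exp_le_exp.mpr (by positivity)
  have hepos : (0:ℝ) < Real.exp (‖x‖ + ‖y‖) := Real.exp_pos _
  rw [hid]
  refine (norm_sub_le _ _).trans ?_
  refine (add_le_add (norm_add_le _ _) le_rfl).trans ?_
  refine (add_le_add (add_le_add (norm_add_le _ _) le_rfl) le_rfl).trans ?_
  refine (add_le_add (add_le_add (add_le_add (norm_add_le _ _) le_rfl) le_rfl) le_rfl).trans ?_
  have t1 : ‖(Ex - 1 - x) * Ey‖ ≤ (‖x‖ ^ 2 * Real.exp ‖x‖) * Real.exp ‖y‖ := by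
    refine (norm_mul_le _ _).trans ?_
    exact mul_le_mul hex hEy (norm_nonneg _) (by positivity)
  have t3 : ‖x * (Ey - 1 - y)‖ ≤ ‖x‖ * (‖y‖ ^ 2 * Real.exp ‖y‖) := by
    refine (norm_mul_le _ _).trans ?_
    exact mul_le_mul_of_nonneg_left hey (norm_nonneg _)
  have t4 : ‖x * y‖ ≤ ‖x‖ * ‖y‖ := norm_mul_le _ _
  have hxy2 : ‖x + y‖ ^ 2 ≤ (‖x‖ + ‖y‖) ^ 2 := by
    exact pow_le_pow_left₀ (norm_nonneg _) hxy 2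
  have t5 : ‖Exy - 1 - (x + y)‖ ≤ (‖x‖ + ‖y‖) ^ 2 * Real.exp (‖x‖ + ‖y‖) := by
    refine hexy.trans ?_
    exact mul_le_mul hxy2 he3 (by positivity) (by positivity)
  have hxe : Real.exp ‖x‖ * Real.exp ‖y‖ = Real.exp (‖x‖ + ‖y‖) := (Real.exp_add _ _).symm
  set s := ‖x‖ + ‖y‖ with hs
  have hsx : ‖x‖ ≤ s := by rw [hs]; linarith
  have hsy : ‖y‖ ≤ s := by rw [hs]; linarith
  have hs0 : (0:ℝ) ≤ s := by positivity
  have u1 : (‖x‖ ^ 2 * Real.exp ‖x‖) * Real.exp ‖y‖ ≤ s ^ 2 * Real.exp s := by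
    rw [mul_assoc, hxe]
    exact mul_le_mul_of_nonneg_right (pow_le_pow_left₀ hx hsx 2) hepos.le
  have u2 : ‖y‖ ^ 2 * Real.exp ‖y‖ ≤ s ^ 2 * Real.exp s :=
    mul_le_mul (pow_le_pow_left₀ hy hsy 2) he2 (by positivity) (by positivity)
  have u3 : ‖x‖ * (‖y‖ ^ 2 * Real.exp ‖y‖) ≤ s * (s ^ 2 * Real.exp s) :=
    mul_le_mul hsx u2 (by positivity) hs0
  have u4 : ‖x‖ * ‖y‖ ≤ s ^ 2 * Real.exp s := by nlinarith
  have q1 := t1.trans u1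
  have q2 := hey.trans u2
  have q3 := t3.trans u3
  have q4 := t4.trans u4
  nlinarith [q1, q2, q3, q4, t5]

lemma abs_reTr_le (Z : Mat) : |Z.trace.re| ≤ (Fintype.card n : ℝ) * ‖Z‖ := by
  have he : ∀ i, ‖Z i i‖ ≤ ‖Z‖ := by
    intro i
    have h2 : ‖Z i i‖₊ ≤ ∑ j, ‖Z i j‖₊ :=
      Finset.single_le_sum (f := fun j => ‖Z i j‖₊) (fun j _ => zero_le) (Finset.mem_univ i)
    have h3 : (∑ j, ‖Z i j‖₊) ≤ ‖Z‖₊ := by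
      rw [Matrix.linfty_opNNNorm_def]
      exact Finset.le_sup (f := fun i => ∑ j, ‖Z i j‖₊) (Finset.mem_univ i)
    exact_mod_cast h2.trans h3
  calc |Z.trace.re| = |(∑ i, Z i i).re| := by rw [Matrix.trace]; rfl
    _ ≤ ‖∑ i, Z i i‖ := Complex.abs_re_le_norm _
    _ ≤ ∑ i, ‖Z i i‖ := norm_sum_le _ _
    _ = ∑ i, ‖Z i i‖ := rfl
    _ ≤ ∑ _i : n, ‖Z‖ := Finset.sum_le_sum fun i _ => he i
    _ = (Fintype.card n : ℝ) * ‖Z‖ := by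
        rw [Finset.sum_const, Finset.card_univ, nsmul_eq_mul]

lemma golden_thompson_exp (A B : Mat) (hA : Aᴴ = A) (hB : Bᴴ = B) :
    (NormedSpace.exp (A + B)).trace.re
      ≤ (NormedSpace.exp A * NormedSpace.exp B).trace.re := by
  set a := ‖A‖ + ‖B‖ with ha
  have ha0 : 0 ≤ a := by positivity
  set c₁ := a ^ 2 * (4 + a) * Real.exp a * Real.exp a with hc₁
  have hc₁0 : 0 ≤ c₁ := by positivity
  set c₀ := (Fintype.card n : ℝ) * c₁ with hc₀
  have hc₀0 : 0 ≤ c₀ := by positivity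
  have hbound : ∀ k : ℕ,
      (NormedSpace.exp (A + B)).trace.re
        ≤ (NormedSpace.exp A * NormedSpace.exp B).trace.re + c₀ / 2 ^ (k+1) := by
    intro k
    set m : ℕ := 2 ^ (k+1) with hm
    have hm1 : (1:ℝ) ≤ (m:ℝ) := by
      rw [hm]; exact_mod_cast Nat.one_le_two_pow
    have hm0 : (0:ℝ) < (m:ℝ) := by linarith
    have hmc : ((m:ℕ):ℂ) ≠ 0 := by
      simp only [ne_eq, Nat.cast_eq_zero]
      rw [hm]; positivity
    set x := (((m:ℕ):ℂ))⁻¹ • A with hx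
    set y := (((m:ℕ):ℂ))⁻¹ • B with hy
    have hxh : xᴴ = x := by
      rw [hx, Matrix.conjTranspose_smul, hA]
      congr 1
      rw [star_inv₀]
      norm_cast
    have hyh : yᴴ = y := by
      rw [hy, Matrix.conjTranspose_smul, hB]
      congr 1
      rw [star_inv₀]
      norm_cast
    have hsmul : ∀ Z : Mat, (m:ℕ) • ((((m:ℕ):ℂ))⁻¹ • Z) = Z := by
      intro Z
      rw [← Nat.cast_smul_eq_nsmul ℂ, smul_smul, mul_inv_cancel₀ hmc, one_smul]
    have hSm : NormedSpace.exp x ^ m = NormedSpace.exp A := by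
      rw [← Matrix.exp_nsmul, hx, hsmul]
    have hTm : NormedSpace.exp y ^ m = NormedSpace.exp B := by
      rw [← Matrix.exp_nsmul, hy, hsmul]
    have hxy : x + y = (((m:ℕ):ℂ))⁻¹ • (A + B) := by rw [hx, hy, smul_add]
    have hQm : NormedSpace.exp (x + y) ^ m = NormedSpace.exp (A + B) := by
      rw [← Matrix.exp_nsmul, hxy, hsmul]
    -- the trace inequality
    have hkey := key k (NormedSpace.exp x) (NormedSpace.exp y)
      (Matrix.IsHermitian.exp hxh) (Matrix.IsHermitian.exp hyh)
    rw [← hm] at hkey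
    rw [hSm, hTm] at hkey
    -- quantitative Lie--Trotter bound
    set s := ‖x‖ + ‖y‖ with hs
    have hs0 : 0 ≤ s := by positivity
    have hxn : ‖x‖ = ‖A‖ / m := by
      rw [hx, norm_smul, norm_inv]
      simp only [RCLike.norm_natCast]
      ring
    have hyn : ‖y‖ = ‖B‖ / m := by
      rw [hy, norm_smul, norm_inv]
      simp only [RCLike.norm_natCast]
      ring
    have hsa : s = a / m := by rw [hs, hxn, hyn, ha]; ring
    have hsle : s ≤ a := by
      rw [hsa]
      calc a / m ≤ a / 1 := by gcongr
        _ = a := by ring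
    have hes : Real.exp s ≤ Real.exp a := Real.exp_le_exp.mpr hsle
    have hP : ‖NormedSpace.exp x * NormedSpace.exp y‖ ≤ Real.exp s := by
      refine (norm_mul_le _ _).trans ?_
      calc ‖NormedSpace.exp x‖ * ‖NormedSpace.exp y‖
          ≤ Real.exp ‖x‖ * Real.exp ‖y‖ :=
            mul_le_mul (norm_exp_le x) (norm_exp_le y) (norm_nonneg _) (Real.exp_pos _).le
        _ = Real.exp s := by rw [← Real.exp_add]
    have hQ : ‖NormedSpace.exp (x + y)‖ ≤ Real.exp s := by
      refine (norm_exp_le _).trans ?_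
      exact Real.exp_le_exp.mpr ((norm_add_le x y).trans le_rfl)
    have htel := pow_telescope (Real.exp_pos s).le hP hQ m
    have htrot := trotter_step x y
    rw [← hs] at htrot
    -- bound C^(m-1) ≤ exp a
    have hCm : Real.exp s ^ (m - 1) ≤ Real.exp a := by
      rw [← Real.exp_nat_mul]
      refine Real.exp_le_exp.mpr ?_
      have h1 : ((m - 1 : ℕ) : ℝ) ≤ (m:ℝ) := by
        exact_mod_cast Nat.cast_le.mpr (Nat.sub_le m 1)
      have h2 : ((m - 1 : ℕ) : ℝ) * s ≤ (m:ℝ) * s := mul_le_mul_of_nonneg_right h1 hs0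
      have h3 : (m:ℝ) * s = a := by rw [hsa]; field_simp
      linarith
    have hstep : ‖NormedSpace.exp x * NormedSpace.exp y - NormedSpace.exp (x + y)‖
        ≤ a ^ 2 / (m:ℝ) ^ 2 * (4 + a) * Real.exp a := by
      refine htrot.trans ?_
      have e1 : s ^ 2 = a ^ 2 / (m:ℝ) ^ 2 := by rw [hsa]; ring
      rw [e1]
      gcongr <;> first
        | linarith
        | positivity
    have hdiff : ‖(NormedSpace.exp x * NormedSpace.exp y) ^ m - NormedSpace.exp (A + B)‖
        ≤ c₁ / m := by
      rw [← hQm]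
      refine htel.trans ?_
      calc (m:ℝ) * Real.exp s ^ (m - 1)
            * ‖NormedSpace.exp x * NormedSpace.exp y - NormedSpace.exp (x + y)‖
          ≤ (m:ℝ) * Real.exp a * (a ^ 2 / (m:ℝ) ^ 2 * (4 + a) * Real.exp a) := by
            have h4 : (0:ℝ) ≤ (m:ℝ) * Real.exp s ^ (m-1) := by positivity
            refine mul_le_mul (mul_le_mul_of_nonneg_left hCm hm0.le) hstep (norm_nonneg _) ?_
            positivity
        _ = c₁ / m * ((m:ℝ) * (m:ℝ) / ((m:ℝ) * (m:ℝ))) := by rw [hc₁]; field_simp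
        _ = c₁ / m := by rw [div_self (by positivity), mul_one]
    -- conclude
    have habs := abs_reTr_le ((NormedSpace.exp x * NormedSpace.exp y) ^ m
      - NormedSpace.exp (A + B))
    rw [Matrix.trace_sub, Complex.sub_re] at habs
    have hcard : (0:ℝ) ≤ (Fintype.card n : ℝ) := by positivity
    have h5 : (Fintype.card n : ℝ)
        * ‖(NormedSpace.exp x * NormedSpace.exp y) ^ m - NormedSpace.exp (A + B)‖
        ≤ c₀ / m := by
      rw [hc₀]
      calc (Fintype.card n : ℝ) * ‖_ - _‖ ≤ (Fintype.card n : ℝ) * (c₁ / m) := by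
            exact mul_le_mul_of_nonneg_left hdiff hcard
        _ = (Fintype.card n : ℝ) * c₁ / m := by ring
    have h6 : (NormedSpace.exp (A + B)).trace.re
        ≤ ((NormedSpace.exp x * NormedSpace.exp y) ^ m).trace.re + c₀ / m := by
      have := abs_le.mp habs
      linarith [this.1, h5, (abs_le.mp habs).2]
    have h7 : ((NormedSpace.exp x * NormedSpace.exp y) ^ m).trace.re
        ≤ (NormedSpace.exp A * NormedSpace.exp B).trace.re := hkey
    have hcast : ((m:ℕ):ℝ) = (2:ℝ) ^ (k+1) := by rw [hm]; push_cast; ring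
    rw [← hcast]
    exact h6.trans (by linarith)
  refine le_of_forall_pos_le_add fun ε hε => ?_
  obtain ⟨N, hN⟩ := pow_unbounded_of_one_lt (c₀ / ε) (one_lt_two (α := ℝ))
  refine (hbound N).trans ?_
  have h2 : (0:ℝ) < 2 ^ (N+1) := by positivity
  have h3 : c₀ / 2 ^ (N+1) < ε := by
    rw [div_lt_iff₀ h2]
    have h4 : (2:ℝ) ^ N ≤ 2 ^ (N+1) := by
      refine pow_le_pow_right₀ one_le_two (Nat.le_succ N)
    have h5 : c₀ / ε < 2 ^ (N+1) := hN.trans_le h4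
    calc c₀ = c₀ / ε * ε := by field_simp
      _ < 2 ^ (N+1) * ε := mul_lt_mul_of_pos_right h5 hε
      _ = ε * 2 ^ (N+1) := by ring
  linarith


end Analysis

end GTaux

theorem golden_thompson {n : Type*} [Fintype n] [DecidableEq n]
    (A B : Matrix n n ℂ) (hA : A.IsHermitian) (hB : B.IsHermitian) :
    (mexp (A + B)).trace.re ≤ (mexp A * mexp B).trace.re := by
  rcases isEmpty_or_nonempty n with h | h
  · simp [Matrix.trace]
  · exact GTaux.golden_thompson_exp A B hA hB
end

section
/- (Powers–Størmer inequality) For positive semi-definite matrices M and N, ‖√M − √N‖₂² ≤ ‖M − N‖₁, where ‖·‖₂ is the Hilbert–Schmidt norm and ‖·‖₁ is the trace norm. -/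
open Matrix
open scoped ComplexOrder

section PSAux

variable {n : Type*} [Fintype n] [DecidableEq n]

/-- every real function is continuous on the (finite) real spectrum of a matrix -/
lemma psContOn (f : ℝ → ℝ) (A : Matrix n n ℂ) : ContinuousOn f (spectrum ℝ A) := by
  have : DiscreteTopology (spectrum ℝ A) := Finite.instDiscreteTopology
  rw [continuousOn_iff_continuous_restrict]
  exact continuous_of_discreteTopology

lemma psCfcPsd (f : ℝ → ℝ) (A : Matrix n n ℂ) (hf : ∀ x, 0 ≤ f x) :
    (cfc f A).PosSemidef := by
  have h1 : cfc f A = cfc (fun x => Real.sqrt (f x) * Real.sqrt (f x)) A :=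
    (cfc_congr fun x _ => Real.mul_self_sqrt (hf x)).symm
  have hsa : IsSelfAdjoint (cfc (fun x => Real.sqrt (f x)) A) := cfc_predicate _ A
  rw [h1, cfc_mul _ _ A (psContOn _ _) (psContOn _ _)]
  nth_rewrite 1 [← hsa.star_eq]
  rw [Matrix.star_eq_conjTranspose]
  exact Matrix.posSemidef_conjTranspose_mul_self _

lemma psSpecNonneg {A : Matrix n n ℂ} (hA : A.PosSemidef) :
    ∀ x ∈ spectrum ℝ A, 0 ≤ x := by
  intro x hx
  rw [hA.1.spectrum_real_eq_range_eigenvalues] at hx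
  obtain ⟨i, rfl⟩ := hx
  exact hA.eigenvalues_nonneg i

lemma psMsqrtPsd {A : Matrix n n ℂ} (hA : A.PosSemidef) : (msqrt A).PosSemidef :=
  psCfcPsd _ A fun x => Real.sqrt_nonneg x

lemma psMsqrtMulSelf {A : Matrix n n ℂ} (hA : A.PosSemidef) : msqrt A * msqrt A = A := by
  rw [msqrt, ← cfc_mul _ _ A (psContOn _ _) (psContOn _ _)]
  calc cfc (fun x => Real.sqrt x * Real.sqrt x) A
      = cfc (id : ℝ → ℝ) A :=
        cfc_congr fun x hx => Real.mul_self_sqrt (psSpecNonneg hA x hx)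
    _ = A := cfc_id ℝ A hA.1.isSelfAdjoint

lemma psTraceReNonneg {Z : Matrix n n ℂ} (hZ : Z.PosSemidef) : 0 ≤ Z.trace.re := by
  have h : ∀ i, 0 ≤ (Z i i).re := by
    intro i
    exact (Complex.le_def.mp hZ.diag_nonneg).1
  rw [Matrix.trace, Complex.re_sum]
  exact Finset.sum_nonneg fun i _ => h i

lemma psTraceMulReNonneg {X Y : Matrix n n ℂ} (hX : X.PosSemidef) (hY : Y.PosSemidef) :
    0 ≤ ((X * Y).trace).re := by
  have hS := psMsqrtPsd hX
  have h : (msqrt X * Y * msqrt X).trace = (X * Y).trace := by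
    rw [Matrix.trace_mul_cycle, psMsqrtMulSelf hX]
  have hpsd : (msqrt X * Y * msqrt X).PosSemidef := by
    have h2 := hY.mul_mul_conjTranspose_same (msqrt X)
    rwa [hS.1.eq] at h2
  rw [← h]
  exact psTraceReNonneg hpsd

end PSAux

theorem powers_stormer {n : Type*} [Fintype n] [DecidableEq n]
    (M N : Matrix n n ℂ) (hM : M.PosSemidef) (hN : N.PosSemidef) :
    hsNorm (msqrt M - msqrt N) ^ 2 ≤ traceNorm (M - N) := by
  set A := msqrt M with hAdef
  set B := msqrt N with hBdef
  have hA : A.PosSemidef := psMsqrtPsd hM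
  have hB : B.PosSemidef := psMsqrtPsd hN
  have hAA : A * A = M := psMsqrtMulSelf hM
  have hBB : B * B = N := psMsqrtMulSelf hN
  set C := A - B with hCdef
  set D := M - N with hDdef
  have hCsa : IsSelfAdjoint C := hA.1.isSelfAdjoint.sub hB.1.isSelfAdjoint
  have hDsa : IsSelfAdjoint D := hM.1.isSelfAdjoint.sub hN.1.isSelfAdjoint
  set Cp := cfc (fun x : ℝ => max x 0) C with hCpdef
  set Cm := cfc (fun x : ℝ => max (-x) 0) C with hCmdef
  set P := cfc (fun x : ℝ => if 0 ≤ x then (1:ℝ) else 0) C with hPdef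
  set Q := cfc (fun x : ℝ => if 0 ≤ x then (0:ℝ) else 1) C with hQdef
  set S := cfc (fun x : ℝ => if 0 ≤ x then (1:ℝ) else -1) C with hSdef
  set EC := cfc (fun x : ℝ => |x|) C with hECdef
  set E := cfc (fun x : ℝ => |x|) D with hEdef
  have hCp : Cp.PosSemidef := psCfcPsd _ _ fun x => le_max_right x 0
  have hCm : Cm.PosSemidef := psCfcPsd _ _ fun x => le_max_right (-x) 0
  have hP : P.PosSemidef := psCfcPsd _ _ fun x => by split <;> norm_num
  have hQ : Q.PosSemidef := psCfcPsd _ _ fun x => by split <;> norm_num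
  -- E ± D are PSD
  have hED1 : (E - D).PosSemidef := by
    have h1 : cfc (fun x : ℝ => |x| - x) D = E - D := by
      rw [cfc_sub (fun x : ℝ => |x|) (fun x : ℝ => x) D (psContOn _ _) (psContOn _ _),
        cfc_id' ℝ D hDsa]
    rw [← h1]
    exact psCfcPsd _ _ fun x => sub_nonneg.mpr (le_abs_self x)
  have hED2 : (E + D).PosSemidef := by
    have h1 : cfc (fun x : ℝ => |x| + x) D = E + D := by
      rw [cfc_add D (fun x : ℝ => |x|) (fun x : ℝ => x) (psContOn _ _) (psContOn _ _),
        cfc_id' ℝ D hDsa]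
    rw [← h1]
    exact psCfcPsd _ _ fun x => by linarith [neg_abs_le x, le_abs_self x]
  -- cfc algebraic identities
  have hCC : C * C = Cp * Cp + Cm * Cm := by
    have h1 : cfc (fun x : ℝ => max x 0 * max x 0 + max (-x) 0 * max (-x) 0) C
        = Cp * Cp + Cm * Cm := by
      rw [cfc_add C _ _ (psContOn _ _) (psContOn _ _),
        cfc_mul _ _ C (psContOn _ _) (psContOn _ _),
        cfc_mul _ _ C (psContOn _ _) (psContOn _ _)]
    have h2 : cfc (fun x : ℝ => max x 0 * max x 0 + max (-x) 0 * max (-x) 0) C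
        = cfc (fun x : ℝ => x * x) C := by
      apply cfc_congr
      intro x _
      beta_reduce
      rcases le_or_gt 0 x with h | h
      · rw [max_eq_left h, max_eq_right (neg_nonpos.mpr h)]; ring
      · rw [max_eq_right h.le, max_eq_left (neg_nonneg.mpr h.le)]; ring
    have h3 : cfc (fun x : ℝ => x * x) C = C * C := by
      rw [cfc_mul _ _ C (psContOn _ _) (psContOn _ _), cfc_id' ℝ C hCsa]
    rw [← h3, ← h2, h1]
  have hCpC : Cp * C = Cp * Cp := by
    have h1 : Cp * C = cfc (fun x : ℝ => max x 0 * x) C := by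
      rw [cfc_mul _ _ C (psContOn _ _) (psContOn _ _), cfc_id' ℝ C hCsa]
    have h2 : cfc (fun x : ℝ => max x 0 * x) C = cfc (fun x : ℝ => max x 0 * max x 0) C := by
      apply cfc_congr
      intro x _
      beta_reduce
      rcases le_or_gt 0 x with h | h
      · rw [max_eq_left h]
      · rw [max_eq_right h.le]; ring
    have h3 : cfc (fun x : ℝ => max x 0 * max x 0) C = Cp * Cp := by
      rw [cfc_mul _ _ C (psContOn _ _) (psContOn _ _)]
    rw [h1, h2, h3]
  have hCmC : Cm * C = -(Cm * Cm) := by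
    have h1 : Cm * C = cfc (fun x : ℝ => max (-x) 0 * x) C := by
      rw [cfc_mul _ _ C (psContOn _ _) (psContOn _ _), cfc_id' ℝ C hCsa]
    have h2 : cfc (fun x : ℝ => max (-x) 0 * x) C
        = cfc (fun x : ℝ => -(max (-x) 0 * max (-x) 0)) C := by
      apply cfc_congr
      intro x _
      beta_reduce
      rcases le_or_gt 0 x with h | h
      · rw [max_eq_right (neg_nonpos.mpr h)]; ring
      · rw [max_eq_left (neg_nonneg.mpr h.le)]; ring
    have h3 : cfc (fun x : ℝ => -(max (-x) 0 * max (-x) 0)) C = -(Cm * Cm) := by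
      have hmul : cfc (fun x : ℝ => max (-x) 0 * max (-x) 0) C = Cm * Cm :=
        cfc_mul _ _ C (psContOn _ _) (psContOn _ _)
      rw [← hmul, ← cfc_neg]
    rw [h1, h2, h3]
  have hECsum : EC = Cp + Cm := by
    have h1 : cfc (fun x : ℝ => max x 0 + max (-x) 0) C = Cp + Cm :=
      cfc_add C _ _ (psContOn _ _) (psContOn _ _)
    rw [← h1]
    apply cfc_congr
    intro x _
    beta_reduce
    rcases le_or_gt 0 x with h | h
    · rw [max_eq_left h, max_eq_right (neg_nonpos.mpr h), abs_of_nonneg h]; ring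
    · rw [max_eq_right h.le, max_eq_left (neg_nonneg.mpr h.le), abs_of_neg h]; ring
  have hCS : C * S = EC := by
    have h1 : C * S = cfc (fun x : ℝ => x * (if 0 ≤ x then (1:ℝ) else -1)) C := by
      rw [cfc_mul _ _ C (psContOn _ _) (psContOn _ _), cfc_id' ℝ C hCsa]
    rw [h1]
    apply cfc_congr
    intro x _
    beta_reduce
    rcases le_or_gt 0 x with h | h
    · rw [if_pos h, abs_of_nonneg h]; ring
    · rw [if_neg (not_le.mpr h), abs_of_neg h]; ring
  have hSC : S * C = EC := by
    have h1 : S * C = cfc (fun x : ℝ => (if 0 ≤ x then (1:ℝ) else -1) * x) C := by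
      rw [cfc_mul _ _ C (psContOn _ _) (psContOn _ _), cfc_id' ℝ C hCsa]
    rw [h1]
    apply cfc_congr
    intro x _
    beta_reduce
    rcases le_or_gt 0 x with h | h
    · rw [if_pos h, abs_of_nonneg h]; ring
    · rw [if_neg (not_le.mpr h), abs_of_neg h]; ring
  have hPQ1 : P + Q = 1 := by
    have h1 : cfc (fun x : ℝ => (if 0 ≤ x then (1:ℝ) else 0) + (if 0 ≤ x then (0:ℝ) else 1)) C
        = P + Q := cfc_add C _ _ (psContOn _ _) (psContOn _ _)
    have h2 : cfc (fun x : ℝ => (if 0 ≤ x then (1:ℝ) else 0) + (if 0 ≤ x then (0:ℝ) else 1)) C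
        = cfc (fun _ : ℝ => (1:ℝ)) C := by
      apply cfc_congr
      intro x _
      beta_reduce
      split <;> norm_num
    rw [← h1, h2, cfc_const 1 C hCsa, _root_.map_one]
  have hPQ2 : P - Q = S := by
    have h1 : cfc (fun x : ℝ => (if 0 ≤ x then (1:ℝ) else 0) - (if 0 ≤ x then (0:ℝ) else 1)) C
        = P - Q := cfc_sub _ _ C (psContOn _ _) (psContOn _ _)
    rw [← h1]
    apply cfc_congr
    intro x _
    beta_reduce
    split <;> norm_num
  -- the key algebraic identity for D
  have hACD : (A + B) * C + C * (A + B) = D + D := by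
    have h1 : (A + B) * (A - B) + (A - B) * (A + B) = A * A - B * B + (A * A - B * B) := by
      noncomm_ring
    rw [hCdef, hDdef, h1, hAA, hBB]
  -- trace identity
  have htr : (EC * (A + B)).trace = (S * D).trace := by
    have h1 : (EC * (A + B)).trace + (EC * (A + B)).trace
        = (S * D).trace + (S * D).trace := by
      nth_rewrite 1 [← hCS]
      nth_rewrite 1 [← hSC]
      calc (C * S * (A + B)).trace + (S * C * (A + B)).trace
          = (S * ((A + B) * C)).trace + (S * (C * (A + B))).trace := by
            rw [← mul_assoc S (A + B) C, (Matrix.trace_mul_cycle S (A + B) C).symm,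
              mul_assoc S C (A + B)]
        _ = (S * ((A + B) * C) + S * (C * (A + B))).trace := (Matrix.trace_add _ _).symm
        _ = (S * ((A + B) * C + C * (A + B))).trace := by rw [← mul_add]
        _ = (S * (D + D)).trace := by rw [hACD]
        _ = (S * D).trace + (S * D).trace := by rw [mul_add, Matrix.trace_add]
    have h2 : (2 : ℂ) * (EC * (A + B)).trace = 2 * (S * D).trace := by
      rw [two_mul, two_mul, h1]
    exact mul_left_cancel₀ two_ne_zero h2
  -- trace inequalities
  have step1 : ((C * C).trace).re = ((Cp * Cp).trace).re + ((Cm * Cm).trace).re := by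
    rw [hCC, Matrix.trace_add, Complex.add_re]
  have step2 : ((Cp * Cp).trace).re ≤ ((Cp * (A + B)).trace).re := by
    have hdiff : Cp * (A + B) - Cp * Cp = Cp * B + Cp * B := by
      rw [← hCpC, ← mul_sub, show A + B - C = B + B by rw [hCdef]; abel, mul_add]
    have hnn : 0 ≤ ((Cp * (A + B) - Cp * Cp).trace).re := by
      rw [hdiff, Matrix.trace_add, Complex.add_re]
      have := psTraceMulReNonneg hCp hB
      linarith
    rw [Matrix.trace_sub, Complex.sub_re] at hnn
    linarith
  have step3 : ((Cm * Cm).trace).re ≤ ((Cm * (A + B)).trace).re := by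
    have h0 : Cm * Cm = -(Cm * C) := by rw [hCmC, neg_neg]
    have hdiff : Cm * (A + B) - Cm * Cm = Cm * A + Cm * A := by
      rw [h0, sub_neg_eq_add, ← mul_add, show A + B + C = A + A by rw [hCdef]; abel, mul_add]
    have hnn : 0 ≤ ((Cm * (A + B) - Cm * Cm).trace).re := by
      rw [hdiff, Matrix.trace_add, Complex.add_re]
      have := psTraceMulReNonneg hCm hA
      linarith
    rw [Matrix.trace_sub, Complex.sub_re] at hnn
    linarith
  have step4 : ((Cp * (A + B)).trace).re + ((Cm * (A + B)).trace).re
      = ((EC * (A + B)).trace).re := by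
    rw [hECsum, add_mul, Matrix.trace_add, Complex.add_re]
  have step5 : ((S * D).trace).re ≤ (E.trace).re := by
    have e1 : S * D = P * D - Q * D := by rw [← hPQ2, sub_mul]
    have i1 : ((P * D).trace).re ≤ ((P * E).trace).re := by
      have h := psTraceMulReNonneg hP hED1
      rw [mul_sub, Matrix.trace_sub, Complex.sub_re] at h
      linarith
    have i2 : -((Q * D).trace).re ≤ ((Q * E).trace).re := by
      have h := psTraceMulReNonneg hQ hED2
      rw [mul_add, Matrix.trace_add, Complex.add_re] at h
      linarith
    have e2 : ((P * E).trace).re + ((Q * E).trace).re = (E.trace).re := by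
      rw [← Complex.add_re, ← Matrix.trace_add, ← add_mul, hPQ1, one_mul]
    rw [e1, Matrix.trace_sub, Complex.sub_re]
    linarith
  -- norms
  have hCherm : Cᴴ = C := hCsa
  have hDherm : Dᴴ = D := hDsa
  have hlhs : hsNorm C ^ 2 = ((C * C).trace).re := by
    rw [hsNorm, hCherm]
    refine Real.sq_sqrt (psTraceReNonneg ?_)
    nth_rewrite 1 [← hCherm]
    exact Matrix.posSemidef_conjTranspose_mul_self C
  have hrhs : traceNorm D = (E.trace).re := by
    rw [traceNorm, hDherm]
    have hDD : cfc (fun x : ℝ => x * x) D = D * D := by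
      rw [cfc_mul _ _ D (psContOn _ _) (psContOn _ _), cfc_id' ℝ D hDsa]
    have hcomp : msqrt (D * D) = cfc (fun x : ℝ => Real.sqrt (x * x)) D := by
      rw [msqrt, ← hDD,
        ← cfc_comp' Real.sqrt (fun x : ℝ => x * x) D Real.continuous_sqrt.continuousOn
          (psContOn _ _) hDsa]
    have habs : cfc (fun x : ℝ => Real.sqrt (x * x)) D = E := by
      apply cfc_congr
      intro x _
      beta_reduce
      rw [← Real.sqrt_mul_self_eq_abs]
    rw [hcomp, habs]
  rw [hlhs, hrhs]
  have htr' : ((EC * (A + B)).trace).re = ((S * D).trace).re := by rw [htr]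
  linarith
end

section
/- For positive semi-definite matrices M and N, ‖M − N‖₁ ≤ ‖√M − √N‖₂ · ‖√M + √N‖₂. -/
open Matrix
open scoped ComplexOrder

open scoped MatrixOrder

section Aux

set_option linter.unusedSectionVars false

variable {n : Type*} [Fintype n] [DecidableEq n]

lemma msqrt_eq {A : Matrix n n ℂ} (hA : A.PosSemidef) : msqrt A = CFC.sqrt A := by
  rw [msqrt, CFC.sqrt_eq_real_sqrt A hA.nonneg, cfcₙ_eq_cfc]

lemma mycfc_mul {A : Matrix n n ℂ} (hA : A.IsHermitian) (f g : ℝ → ℝ) :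
    hA.cfc f * hA.cfc g = hA.cfc (fun x => f x * g x) := by
  unfold Matrix.IsHermitian.cfc
  rw [Unitary.conjStarAlgAut_apply, Unitary.conjStarAlgAut_apply, Unitary.conjStarAlgAut_apply]
  have h1 : (star hA.eigenvectorUnitary : Matrix n n ℂ) * hA.eigenvectorUnitary = 1 :=
    Unitary.star_mul_self_of_mem (SetLike.coe_mem _)
  have key : ∀ a b c d e f : Matrix n n ℂ, (a * b * c) * (d * e * f) = a * (b * (c * d) * e) * f := by
    intro a b c d e f; simp only [mul_assoc]
  rw [key, h1, mul_one, diagonal_mul_diagonal]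
  congr! with i
  simp

lemma mycfc_id {A : Matrix n n ℂ} (hA : A.IsHermitian) : hA.cfc (fun x => x) = A := by
  unfold Matrix.IsHermitian.cfc
  exact hA.spectral_theorem.symm

lemma mycfc_one {A : Matrix n n ℂ} (hA : A.IsHermitian) : hA.cfc (fun _ => 1) = 1 := by
  unfold Matrix.IsHermitian.cfc
  rw [Unitary.conjStarAlgAut_apply]
  have h1 : (hA.eigenvectorUnitary : Matrix n n ℂ) * star (hA.eigenvectorUnitary : Matrix n n ℂ) = 1 :=
    Unitary.mul_star_self_of_mem (SetLike.coe_mem _)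
  have : diagonal (RCLike.ofReal ∘ (fun _ : ℝ => (1:ℝ)) ∘ hA.eigenvalues) = (1 : Matrix n n ℂ) := by
    simp [Function.comp_def, Pi.one_def (M := fun _ : n ↦ ℂ)]
  rw [this, mul_one, h1]

lemma mycfc_conjT {A : Matrix n n ℂ} (hA : A.IsHermitian) (f : ℝ → ℝ) :
    (hA.cfc f)ᴴ = hA.cfc f := by
  unfold Matrix.IsHermitian.cfc
  rw [Unitary.conjStarAlgAut_apply]
  rw [← star_eq_conjTranspose]
  simp only [StarMul.star_mul, star_star, mul_assoc]
  rw [star_eq_conjTranspose (diagonal _), diagonal_conjTranspose]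
  congr!
  simp [Pi.star_def, Function.comp_def]

lemma mycfc_herm {A : Matrix n n ℂ} (hA : A.IsHermitian) (f : ℝ → ℝ) :
    (hA.cfc f).IsHermitian := mycfc_conjT hA f

lemma mycfc_trace {A : Matrix n n ℂ} (hA : A.IsHermitian) (f : ℝ → ℝ) :
    (hA.cfc f).trace = ∑ i, (f (hA.eigenvalues i) : ℂ) := by
  unfold Matrix.IsHermitian.cfc
  rw [Unitary.conjStarAlgAut_apply]
  rw [trace_mul_cycle]
  have h1 : (star hA.eigenvectorUnitary : Matrix n n ℂ) * hA.eigenvectorUnitary = 1 :=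
    Unitary.star_mul_self_of_mem (SetLike.coe_mem _)
  rw [h1, one_mul, trace_diagonal]
  rfl

lemma mycfc_psd {A : Matrix n n ℂ} (hA : A.IsHermitian) (f : ℝ → ℝ) (hf : ∀ x, 0 ≤ f x) :
    (hA.cfc f).PosSemidef := by
  unfold Matrix.IsHermitian.cfc
  rw [Unitary.conjStarAlgAut_apply]
  rw [star_eq_conjTranspose]
  apply PosSemidef.mul_mul_conjTranspose_same
  refine posSemidef_diagonal_iff.mpr fun i ↦ ?_
  rw [Function.comp_apply, RCLike.nonneg_iff]
  constructor
  · simpa using hf _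
  · simp

lemma mycfc_congr {A : Matrix n n ℂ} (hA : A.IsHermitian) {f g : ℝ → ℝ}
    (h : ∀ i, f (hA.eigenvalues i) = g (hA.eigenvalues i)) : hA.cfc f = hA.cfc g := by
  unfold Matrix.IsHermitian.cfc
  have : (RCLike.ofReal ∘ f ∘ hA.eigenvalues : n → ℂ) = RCLike.ofReal ∘ g ∘ hA.eigenvalues :=
    funext fun i => congrArg _ (h i)
  rw [this]

lemma trace_conjT_mul (P Q : Matrix n n ℂ) :
    (Pᴴ * Q).trace = ∑ p : n × n, (starRingEnd ℂ) (P p.1 p.2) * Q p.1 p.2 := by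
  rw [Matrix.trace, Fintype.sum_prod_type]
  rw [Finset.sum_comm]
  simp [Matrix.diag, Matrix.mul_apply, Matrix.conjTranspose_apply]

lemma hsNorm_sq (P : Matrix n n ℂ) :
    (Pᴴ * P).trace.re = ∑ p : n × n, ‖P p.1 p.2‖ ^ 2 := by
  rw [trace_conjT_mul, Complex.re_sum]
  congr 1 with p
  rw [mul_comm, Complex.mul_conj]
  rw [Complex.ofReal_re, Complex.normSq_eq_norm_sq]

lemma trace_cs (P Q : Matrix n n ℂ) : ‖(Pᴴ * Q).trace‖ ≤ hsNorm P * hsNorm Q := by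
  let u : EuclideanSpace ℂ (n × n) := WithLp.toLp 2 (fun p : n × n => P p.1 p.2)
  let v : EuclideanSpace ℂ (n × n) := WithLp.toLp 2 (fun p : n × n => Q p.1 p.2)
  have h1 : (Pᴴ * Q).trace = inner ℂ u v := by
    rw [trace_conjT_mul, PiLp.inner_apply]
    simp [u, v, RCLike.inner_apply, mul_comm]
  have h2 : hsNorm P = ‖u‖ := by
    rw [hsNorm, hsNorm_sq, EuclideanSpace.norm_eq]
  have h3 : hsNorm Q = ‖v‖ := by
    rw [hsNorm, hsNorm_sq, EuclideanSpace.norm_eq]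
  rw [h1, h2, h3]
  exact norm_inner_le_norm u v

lemma hsNorm_mul_of_sq_one (A W : Matrix n n ℂ) (hWh : Wᴴ = W) (hW2 : W * W = 1) :
    hsNorm (A * W) = hsNorm A := by
  unfold hsNorm
  congr 2
  rw [conjTranspose_mul, hWh]
  have h1 : W * Aᴴ * (A * W) = W * (Aᴴ * A) * W := by simp only [mul_assoc]
  rw [h1, trace_mul_cycle, ← mul_assoc, hW2, one_mul]

end Aux

theorem traceNorm_le_hsNorm_mul {n : Type*} [Fintype n] [DecidableEq n]
    (M N : Matrix n n ℂ) (hM : M.PosSemidef) (hN : N.PosSemidef) :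
    traceNorm (M - N) ≤ hsNorm (msqrt M - msqrt N) * hsNorm (msqrt M + msqrt N) := by
  have hP : (msqrt M).PosSemidef := by rw [msqrt_eq hM]; exact (CFC.sqrt_nonneg M).posSemidef
  have hQ : (msqrt N).PosSemidef := by rw [msqrt_eq hN]; exact (CFC.sqrt_nonneg N).posSemidef
  have hPP : msqrt M * msqrt M = M := by rw [msqrt_eq hM]; exact CFC.sqrt_mul_sqrt_self M hM.nonneg
  have hQQ : msqrt N * msqrt N = N := by rw [msqrt_eq hN]; exact CFC.sqrt_mul_sqrt_self N hN.nonneg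
  set A := msqrt M - msqrt N with hAdef
  set B := msqrt M + msqrt N with hBdef
  have hAh : Aᴴ = A := hP.1.sub hQ.1
  have hBh : Bᴴ = B := hP.1.add hQ.1
  set X := M - N with hXdef
  have hX : X.IsHermitian := hM.1.sub hN.1
  have hkey : A * B + B * A = X + X := by
    have : (msqrt M - msqrt N) * (msqrt M + msqrt N) + (msqrt M + msqrt N) * (msqrt M - msqrt N)
        = (msqrt M * msqrt M - msqrt N * msqrt N) + (msqrt M * msqrt M - msqrt N * msqrt N) := by
      noncomm_ring
    rw [hAdef, hBdef, this, hPP, hQQ]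
  -- the sign matrix
  set s : ℝ → ℝ := fun x => if x < 0 then -1 else 1 with hsdef
  set W := hX.cfc s with hWdef
  have hWh : Wᴴ = W := mycfc_conjT hX s
  have hW2 : W * W = 1 := by
    rw [hWdef, mycfc_mul]
    rw [show (fun x => s x * s x) = fun _ : ℝ => (1:ℝ) by
      funext x; rw [hsdef]; dsimp only; split <;> norm_num]
    exact mycfc_one hX
  -- |X| and the trace norm
  have hXX : (X * X).PosSemidef := by
    have h := posSemidef_conjTranspose_mul_self X
    rwa [hX] at h
  have habs_psd : (hX.cfc (fun x => |x|)).PosSemidef := mycfc_psd hX _ fun x => abs_nonneg x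
  have hXsq : X * X = hX.cfc (fun x => x * x) := by
    rw [← mycfc_mul hX (fun x => x) (fun x => x), mycfc_id]
  have habs_sq : hX.cfc (fun x => |x|) ^ 2 = X * X := by
    rw [pow_two, mycfc_mul hX, hXsq]
    exact mycfc_congr hX fun i => abs_mul_abs_self _
  have hmsqrt : msqrt (Xᴴ * X) = hX.cfc (fun x => |x|) := by
    rw [hX, msqrt_eq hXX]
    exact CFC.sqrt_unique (by rw [← pow_two]; exact habs_sq) habs_psd.nonneg
  have hWX : W * X = hX.cfc (fun x => s x * x) := by
    rw [hWdef, ← mycfc_mul hX s (fun x => x), mycfc_id]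
  have htrace_eq : (hX.cfc (fun x => |x|)).trace = (W * X).trace := by
    rw [hWX, mycfc_trace, mycfc_trace]
    congr 1 with i
    congr 1
    rw [hsdef]
    dsimp only
    split
    · rename_i h; rw [abs_of_neg h]; ring
    · rename_i h; rw [abs_of_nonneg (not_lt.mp h)]; ring
  have htn : traceNorm X = (W * X).trace.re := by
    rw [traceNorm, hmsqrt, htrace_eq]
  -- split the trace
  have h2tr : (W * X).trace + (W * X).trace = (W * (A * B)).trace + (W * (B * A)).trace := by
    rw [← Matrix.trace_add, ← Matrix.trace_add, ← mul_add, ← mul_add, hkey]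
  -- bounds
  have hb1 : (W * (A * B)).trace.re ≤ hsNorm A * hsNorm B := by
    have he : W * (A * B) = (A * W)ᴴ * B := by
      rw [conjTranspose_mul, hAh, hWh, mul_assoc]
    calc (W * (A * B)).trace.re ≤ ‖(W * (A * B)).trace‖ := Complex.re_le_norm _
      _ = ‖((A * W)ᴴ * B).trace‖ := by rw [he]
      _ ≤ hsNorm (A * W) * hsNorm B := trace_cs _ _
      _ = hsNorm A * hsNorm B := by rw [hsNorm_mul_of_sq_one A W hWh hW2]
  have hb2 : (W * (B * A)).trace.re ≤ hsNorm A * hsNorm B := by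
    have he : W * (B * A) = (B * W)ᴴ * A := by
      rw [conjTranspose_mul, hBh, hWh, mul_assoc]
    calc (W * (B * A)).trace.re ≤ ‖(W * (B * A)).trace‖ := Complex.re_le_norm _
      _ = ‖((B * W)ᴴ * A).trace‖ := by rw [he]
      _ ≤ hsNorm (B * W) * hsNorm A := trace_cs _ _
      _ = hsNorm A * hsNorm B := by rw [hsNorm_mul_of_sq_one B W hWh hW2, mul_comm]
  have hre : (W * X).trace.re + (W * X).trace.re
      = (W * (A * B)).trace.re + (W * (B * A)).trace.re := by
    have := congrArg Complex.re h2tr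
    simpa [Complex.add_re] using this
  rw [htn]
  linarith
end

section
/- For density matrices ρ and σ, (1/‖√ρ+√σ‖₂²)·‖ρ − σ‖₁² ≤ ‖√ρ − √σ‖₂² ≤ ‖ρ − σ‖₁; in particular (1/4)‖ρ − σ‖₁² ≤ ‖√ρ − √σ‖₂². -/
open Matrix
open scoped ComplexOrder

namespace HSaux

variable {n : Type*} [Fintype n] [DecidableEq n]

lemma diag_re_nonneg {M : Matrix n n ℂ} (hM : M.PosSemidef) (i : n) : 0 ≤ (M i i).re := by
  exact (Complex.le_def.mp (hM.diag_nonneg (i := i))).1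

lemma conj_trace {M U : Matrix n n ℂ} (hU : U * star U = 1) :
    (star U * M * U).trace = M.trace := by
  rw [Matrix.trace_mul_cycle, hU, one_mul]

lemma conj_mul {M M' U : Matrix n n ℂ} (hU : U * star U = 1) :
    star U * (M * M') * U = (star U * M * U) * (star U * M' * U) := by
  calc star U * (M * M') * U = star U * M * (U * star U) * M' * U := by rw [hU]; noncomm_ring
    _ = _ := by noncomm_ring

lemma conj_psd {M : Matrix n n ℂ} (U : Matrix n n ℂ) (hM : M.PosSemidef) :
    (star U * M * U).PosSemidef := by
  rw [Matrix.star_eq_conjTranspose]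
  exact hM.conjTranspose_mul_mul_same U

lemma trace_entries (M : Matrix n n ℂ) :
    (Mᴴ * M).trace.re = ∑ p : n × n, ‖M p.1 p.2‖ ^ 2 := by
  have h : (Mᴴ * M).trace = ∑ i, ∑ j, ((‖M j i‖ ^ 2 : ℝ) : ℂ) := by
    simp only [Matrix.trace, Matrix.diag, Matrix.mul_apply, Matrix.conjTranspose_apply]
    congr 1; ext i; congr 1; ext j
    simp [Complex.sq_norm, Complex.normSq_eq_conj_mul_self, RCLike.star_def, Complex.conj_mul']
    try rfl
  rw [h]
  simp only [Complex.re_sum, Complex.ofReal_re]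
  rw [Fintype.sum_prod_type]
  exact Finset.sum_comm

lemma trace_entries_nonneg (M : Matrix n n ℂ) : 0 ≤ (Mᴴ * M).trace.re := by
  rw [trace_entries]; positivity

lemma hsNorm_sq (M : Matrix n n ℂ) : hsNorm M ^ 2 = (Mᴴ * M).trace.re :=
  Real.sq_sqrt (trace_entries_nonneg M)

lemma unitary_mul_star {M : Matrix n n ℂ} (hM : M.IsHermitian) :
    (hM.eigenvectorUnitary : Matrix n n ℂ) * star (hM.eigenvectorUnitary : Matrix n n ℂ) = 1 :=
  (Matrix.mem_unitaryGroup_iff).mp hM.eigenvectorUnitary.2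

lemma unitary_star_mul {M : Matrix n n ℂ} (hM : M.IsHermitian) :
    star (hM.eigenvectorUnitary : Matrix n n ℂ) * (hM.eigenvectorUnitary : Matrix n n ℂ) = 1 :=
  (Matrix.mem_unitaryGroup_iff').mp hM.eigenvectorUnitary.2

lemma conj_spectral {M : Matrix n n ℂ} (hM : M.IsHermitian) :
    star (hM.eigenvectorUnitary : Matrix n n ℂ) * M * (hM.eigenvectorUnitary : Matrix n n ℂ)
      = diagonal (fun i => ((hM.eigenvalues i : ℝ) : ℂ)) := by
  have hfun : (RCLike.ofReal ∘ hM.eigenvalues : n → ℂ) = fun i => ((hM.eigenvalues i : ℝ) : ℂ) := by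
    funext i; rfl
  rw [← hfun]
  set U : Matrix n n ℂ := (hM.eigenvectorUnitary : Matrix n n ℂ) with hUdef
  have h0 : star U * M * U
      = star U * (U * diagonal (RCLike.ofReal ∘ hM.eigenvalues) * star U) * U :=
    congrArg (fun Z => star U * Z * U) hM.spectral_theorem
  have h : star U * (U * diagonal (RCLike.ofReal ∘ hM.eigenvalues) * star U) * U
      = (star U * U) * diagonal (RCLike.ofReal ∘ hM.eigenvalues) * (star U * U) := by
    noncomm_ring
  rw [h0, h, unitary_star_mul hM, one_mul, mul_one]

lemma trace_cfc {M : Matrix n n ℂ} (hM : M.IsHermitian) (f : ℝ → ℝ) :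
    (cfc f M).trace = ∑ i, ((f (hM.eigenvalues i) : ℝ) : ℂ) := by
  rw [hM.cfc_eq, Matrix.IsHermitian.cfc, Unitary.conjStarAlgAut_apply, Matrix.trace_mul_cycle, unitary_star_mul hM, one_mul,
    Matrix.trace_diagonal]
  simp [Function.comp]

lemma cfc_psd {M : Matrix n n ℂ} (hM : M.IsHermitian) (f : ℝ → ℝ) (hf : ∀ x, 0 ≤ f x) :
    (cfc f M).PosSemidef := by
  rw [hM.cfc_eq, Matrix.IsHermitian.cfc]
  have h : (Matrix.diagonal (RCLike.ofReal ∘ f ∘ hM.eigenvalues) : Matrix n n ℂ).PosSemidef :=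
    Matrix.posSemidef_diagonal_iff.mpr fun i => by
      simpa using Complex.zero_le_real.mpr (hf (hM.eigenvalues i))
  simpa [Matrix.star_eq_conjTranspose] using
    h.mul_mul_conjTranspose_same (hM.eigenvectorUnitary : Matrix n n ℂ)

lemma msqrt_posSemidef {ρ : Matrix n n ℂ} (hρ : ρ.PosSemidef) : (msqrt ρ).PosSemidef :=
  cfc_psd hρ.1 _ fun x => Real.sqrt_nonneg x

lemma msqrt_mul_self {ρ : Matrix n n ℂ} (hρ : ρ.PosSemidef) : msqrt ρ * msqrt ρ = ρ := by
  have hsa : IsSelfAdjoint ρ := hρ.1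
  rw [msqrt, ← cfc_mul Real.sqrt Real.sqrt ρ]
  have h : cfc (fun x => Real.sqrt x * Real.sqrt x) ρ = cfc (fun x : ℝ => x) ρ := by
    apply cfc_congr
    intro x hx
    rw [hρ.isHermitian.spectrum_real_eq_range_eigenvalues] at hx
    obtain ⟨i, rfl⟩ := hx
    exact Real.mul_self_sqrt (hρ.eigenvalues_nonneg i)
  rw [h, cfc_id' ℝ ρ]

lemma traceNorm_eq_sum_abs {X : Matrix n n ℂ} (hX : X.IsHermitian) :
    traceNorm X = ∑ i, |hX.eigenvalues i| := by
  have hsa : IsSelfAdjoint X := hX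
  have h2 : Xᴴ * X = X ^ 2 := by rw [hX.eq, sq]
  have habs : msqrt (X ^ 2) = cfc (fun t : ℝ => |t|) X := by
    rw [msqrt, ← cfc_comp_pow Real.sqrt 2 X]
    exact cfc_congr fun x _ => Real.sqrt_sq_eq_abs x
  rw [traceNorm, h2, habs, trace_cfc hX]
  simp only [Complex.re_sum, Complex.ofReal_re]


lemma powers_stormer {Δ D X : Matrix n n ℂ} (hΔh : Δ.IsHermitian) (hXh : X.IsHermitian)
    (hDp : (D + Δ).PosSemidef) (hDm : (D - Δ).PosSemidef)
    (hkey : Δ * D + D * Δ = X + X) :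
    (Δ * Δ).trace.re ≤ traceNorm X := by
  have hsaX : IsSelfAdjoint X := hXh
  set U : Matrix n n ℂ := (hΔh.eigenvectorUnitary : Matrix n n ℂ) with hUdef
  have hUm : U * star U = 1 := unitary_mul_star hΔh
  have hNΔ : star U * Δ * U = diagonal (fun i => ((hΔh.eigenvalues i : ℝ) : ℂ)) :=
    conj_spectral hΔh
  set lam := hΔh.eigenvalues with hlam
  set Y := cfc (fun t : ℝ => |t|) X with hYdef
  have hΔdiag : ∀ i, (star U * Δ * U) i i = ((lam i : ℝ) : ℂ) := by
    intro i; rw [hNΔ, Matrix.diagonal_apply_eq]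
  have hDge : ∀ i, |lam i| ≤ ((star U * D * U) i i).re := by
    intro i
    have h1 := diag_re_nonneg (conj_psd U hDp) i
    have h2 := diag_re_nonneg (conj_psd U hDm) i
    have e1 : star U * (D + Δ) * U = star U * D * U + star U * Δ * U := by noncomm_ring
    have e2 : star U * (D - Δ) * U = star U * D * U - star U * Δ * U := by noncomm_ring
    rw [e1, Matrix.add_apply, Complex.add_re, hΔdiag i, Complex.ofReal_re] at h1
    rw [e2, Matrix.sub_apply, Complex.sub_re, hΔdiag i, Complex.ofReal_re] at h2
    exact abs_le.mpr ⟨by linarith, by linarith⟩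
  have hXdiag : ∀ i, ((star U * X * U) i i).re = lam i * ((star U * D * U) i i).re := by
    intro i
    have h : (star U * (Δ * D + D * Δ) * U) i i = (star U * (X + X) * U) i i :=
      congrArg (fun M : Matrix n n ℂ => (star U * M * U) i i) hkey
    have eL : star U * (Δ * D + D * Δ) * U
        = (star U * Δ * U) * (star U * D * U) + (star U * D * U) * (star U * Δ * U) := by
      rw [← conj_mul hUm, ← conj_mul hUm]; noncomm_ring
    have eR : star U * (X + X) * U = star U * X * U + star U * X * U := by noncomm_ring
    rw [eL, eR, hNΔ] at h
    simp only [Matrix.add_apply, Matrix.diagonal_mul, Matrix.mul_diagonal] at h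
    have h2 : ((lam i : ℝ) : ℂ) * ((star U * D * U) i i) = (star U * X * U) i i := by
      apply mul_left_cancel₀ (two_ne_zero (α := ℂ))
      linear_combination h
    rw [← h2, Complex.mul_re, Complex.ofReal_re, Complex.ofReal_im]
    ring
  have hYp : (Y + X).PosSemidef := by
    have h : cfc (fun t : ℝ => |t| + t) X = Y + X := by
      rw [cfc_add (a := X) (fun t : ℝ => |t|) (fun t : ℝ => t), cfc_id' ℝ X]
    rw [← h]
    exact cfc_psd hXh _ fun t => by linarith [neg_abs_le t, abs_nonneg t]
  have hYm : (Y - X).PosSemidef := by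
    have h : cfc (fun t : ℝ => |t| - t) X = Y - X := by
      rw [cfc_sub (a := X) (fun t : ℝ => |t|) (fun t : ℝ => t), cfc_id' ℝ X]
    rw [← h]
    exact cfc_psd hXh _ fun t => by linarith [le_abs_self t]
  have hYge : ∀ i, |((star U * X * U) i i).re| ≤ ((star U * Y * U) i i).re := by
    intro i
    have h1 := diag_re_nonneg (conj_psd U hYp) i
    have h2 := diag_re_nonneg (conj_psd U hYm) i
    have e1 : star U * (Y + X) * U = star U * Y * U + star U * X * U := by noncomm_ring
    have e2 : star U * (Y - X) * U = star U * Y * U - star U * X * U := by noncomm_ring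
    rw [e1, Matrix.add_apply, Complex.add_re] at h1
    rw [e2, Matrix.sub_apply, Complex.sub_re] at h2
    exact abs_le.mpr ⟨by linarith, by linarith⟩
  have hsum : ∑ i, lam i ^ 2 ≤ ∑ i, ((star U * Y * U) i i).re := by
    apply Finset.sum_le_sum
    intro i _
    have h1 := hDge i
    have h2 := hYge i
    rw [hXdiag i] at h2
    have h3 : (0:ℝ) ≤ ((star U * D * U) i i).re := le_trans (abs_nonneg _) h1
    have habs : |lam i * ((star U * D * U) i i).re|
        = |lam i| * ((star U * D * U) i i).re := by
      rw [abs_mul, abs_of_nonneg h3]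
    rw [habs] at h2
    nlinarith [abs_nonneg (lam i), sq_abs (lam i)]
  have hL : (Δ * Δ).trace.re = ∑ i, lam i ^ 2 := by
    have h : (Δ * Δ).trace = (star U * (Δ * Δ) * U).trace := (conj_trace hUm).symm
    rw [h, conj_mul hUm, hNΔ, Matrix.diagonal_mul_diagonal, Matrix.trace_diagonal]
    simp [Complex.re_sum, ← Complex.ofReal_mul, sq]
  have hR : ∑ i, ((star U * Y * U) i i).re = traceNorm X := by
    have h1 : ∑ i, ((star U * Y * U) i i).re = (star U * Y * U).trace.re := by
      rw [Matrix.trace, Complex.re_sum]; rfl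
    rw [h1, conj_trace hUm, traceNorm_eq_sum_abs hXh, hYdef, trace_cfc hXh]
    simp [Complex.re_sum]
  rw [hL, ← hR]
  exact hsum

lemma traceNorm_le_hs {Δ D X : Matrix n n ℂ} (hΔh : Δ.IsHermitian) (hDh : D.IsHermitian)
    (hXh : X.IsHermitian) (hkey : Δ * D + D * Δ = X + X) :
    traceNorm X ≤ Real.sqrt ((Δᴴ * Δ).trace.re) * Real.sqrt ((Dᴴ * D).trace.re) := by
  set W : Matrix n n ℂ := (hXh.eigenvectorUnitary : Matrix n n ℂ) with hW
  have hWm : W * star W = 1 := unitary_mul_star hXh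
  set μ := hXh.eigenvalues with hμ
  set P := star W * Δ * W with hP
  set Q := star W * D * W with hQ
  have hNX : star W * X * W = diagonal (fun i => ((μ i : ℝ) : ℂ)) := conj_spectral hXh
  have hPh : P.IsHermitian := by
    rw [hP, Matrix.star_eq_conjTranspose]
    exact Matrix.isHermitian_conjTranspose_mul_mul W hΔh
  have hQh : Q.IsHermitian := by
    rw [hQ, Matrix.star_eq_conjTranspose]
    exact Matrix.isHermitian_conjTranspose_mul_mul W hDh
  have hPQ : P * Q + Q * P
      = diagonal (fun i => ((μ i : ℝ) : ℂ)) + diagonal (fun i => ((μ i : ℝ) : ℂ)) := by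
    rw [hP, hQ, ← conj_mul hWm, ← conj_mul hWm, ← hNX]
    calc star W * (Δ * D) * W + star W * (D * Δ) * W
        = star W * (Δ * D + D * Δ) * W := by noncomm_ring
      _ = star W * (X + X) * W := by rw [hkey]
      _ = star W * X * W + star W * X * W := by noncomm_ring
  have hband : ∀ i, |μ i| ≤ ∑ k, ‖P i k‖ * ‖Q i k‖ := by
    intro i
    have h := congrArg (fun M => M i i) hPQ
    simp only [Matrix.add_apply, Matrix.mul_apply, Matrix.diagonal_apply_eq] at h
    have hQsym : ∀ k, ‖Q k i‖ = ‖Q i k‖ := by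
      intro k
      conv_rhs => rw [← hQh.eq]
      rw [Matrix.conjTranspose_apply, norm_star]
    have hPsym : ∀ k, ‖P k i‖ = ‖P i k‖ := by
      intro k
      conv_rhs => rw [← hPh.eq]
      rw [Matrix.conjTranspose_apply, norm_star]
    have b1 : ‖∑ k, P i k * Q k i‖ ≤ ∑ k, ‖P i k‖ * ‖Q i k‖ := by
      refine le_trans (norm_sum_le _ _) (Finset.sum_le_sum fun k _ => ?_)
      rw [norm_mul, hQsym k]
    have b2 : ‖∑ k, Q i k * P k i‖ ≤ ∑ k, ‖P i k‖ * ‖Q i k‖ := by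
      refine le_trans (norm_sum_le _ _) (Finset.sum_le_sum fun k _ => ?_)
      rw [norm_mul, hPsym k, mul_comm]
    have hn : ‖(∑ k, P i k * Q k i) + ∑ k, Q i k * P k i‖ = 2 * |μ i| := by
      rw [h]
      have : ((μ i : ℝ) : ℂ) + ((μ i : ℝ) : ℂ) = ((2 * μ i : ℝ) : ℂ) := by push_cast; ring
      rw [this, Complex.norm_real, Real.norm_eq_abs, abs_mul]
      norm_num
    have := norm_add_le (∑ k, P i k * Q k i) (∑ k, Q i k * P k i)
    rw [hn] at this
    linarith
  have frob : ∀ (M : Matrix n n ℂ), M.IsHermitian →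
      (star W * M * W)ᴴ * (star W * M * W) = star W * (Mᴴ * M) * W := by
    intro M hM
    have e1 : (star W * M * W)ᴴ = star W * Mᴴ * W := by
      simp [Matrix.star_eq_conjTranspose, Matrix.conjTranspose_mul, mul_assoc]
    rw [e1, ← conj_mul hWm]
  have hPfrob : ∑ p : n × n, ‖P p.1 p.2‖ ^ 2 = (Δᴴ * Δ).trace.re := by
    rw [← trace_entries P]
    rw [hP, frob Δ hΔh, conj_trace hWm]
  have hQfrob : ∑ p : n × n, ‖Q p.1 p.2‖ ^ 2 = (Dᴴ * D).trace.re := by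
    rw [← trace_entries Q]
    rw [hQ, frob D hDh, conj_trace hWm]
  calc traceNorm X = ∑ i, |μ i| := traceNorm_eq_sum_abs hXh
    _ ≤ ∑ i, ∑ k, ‖P i k‖ * ‖Q i k‖ := Finset.sum_le_sum fun i _ => hband i
    _ = ∑ p : n × n, ‖P p.1 p.2‖ * ‖Q p.1 p.2‖ := by rw [Fintype.sum_prod_type]
    _ ≤ Real.sqrt (∑ p : n × n, ‖P p.1 p.2‖ ^ 2) * Real.sqrt (∑ p : n × n, ‖Q p.1 p.2‖ ^ 2) :=
        Real.sum_mul_le_sqrt_mul_sqrt _ _ _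
    _ = _ := by rw [hPfrob, hQfrob]

end HSaux

theorem hsNorm_traceNorm_sandwich {n : Type*} [Fintype n] [DecidableEq n]
    (ρ σ : Matrix n n ℂ) (hρ : ρ.PosSemidef) (hσ : σ.PosSemidef)
    (hρ1 : ρ.trace = 1) (hσ1 : σ.trace = 1) :
    (1 / hsNorm (msqrt ρ + msqrt σ) ^ 2) * traceNorm (ρ - σ) ^ 2 ≤
        hsNorm (msqrt ρ - msqrt σ) ^ 2 ∧
      hsNorm (msqrt ρ - msqrt σ) ^ 2 ≤ traceNorm (ρ - σ) ∧
      (1 / 4) * traceNorm (ρ - σ) ^ 2 ≤ hsNorm (msqrt ρ - msqrt σ) ^ 2 := by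
  have hA := HSaux.msqrt_posSemidef hρ
  have hB := HSaux.msqrt_posSemidef hσ
  have hAA : msqrt ρ * msqrt ρ = ρ := HSaux.msqrt_mul_self hρ
  have hBB : msqrt σ * msqrt σ = σ := HSaux.msqrt_mul_self hσ
  set A := msqrt ρ with hAdef
  set B := msqrt σ with hBdef
  have hΔh : (A - B).IsHermitian := hA.1.sub hB.1
  have hDh : (A + B).IsHermitian := hA.1.add hB.1
  have hXh : (ρ - σ).IsHermitian := hρ.1.sub hσ.1
  have hkey : (A - B) * (A + B) + (A + B) * (A - B) = (ρ - σ) + (ρ - σ) := by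
    rw [← hAA, ← hBB]; noncomm_ring
  have hDp : ((A + B) + (A - B)).PosSemidef := by
    have e : (A + B) + (A - B) = A + A := by abel
    rw [e]; exact hA.add hA
  have hDm : ((A + B) - (A - B)).PosSemidef := by
    have e : (A + B) - (A - B) = B + B := by abel
    rw [e]; exact hB.add hB
  have hIV : hsNorm (A - B) ^ 2 ≤ traceNorm (ρ - σ) := by
    have h := HSaux.powers_stormer hΔh hXh hDp hDm hkey
    rwa [HSaux.hsNorm_sq, hΔh.eq]
  have hIII : traceNorm (ρ - σ) ≤ hsNorm (A - B) * hsNorm (A + B) :=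
    HSaux.traceNorm_le_hs hΔh hDh hXh hkey
  have hT0 : 0 ≤ traceNorm (ρ - σ) := by
    rw [HSaux.traceNorm_eq_sum_abs hXh]; positivity
  have hd4 : hsNorm (A + B) ^ 2 ≤ 4 := by
    rw [HSaux.hsNorm_sq, hDh.eq]
    have h : (A + B) * (A + B) + (A - B) * (A - B) = (ρ + σ) + (ρ + σ) := by
      rw [← hAA, ← hBB]; noncomm_ring
    have htr := congrArg Matrix.trace h
    rw [Matrix.trace_add, Matrix.trace_add, Matrix.trace_add, hρ1, hσ1] at htr
    have h0 : 0 ≤ ((A - B) * (A - B)).trace.re := by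
      have := HSaux.trace_entries_nonneg (A - B)
      rwa [hΔh.eq] at this
    have hre := congrArg Complex.re htr
    rw [Complex.add_re, Complex.add_re] at hre
    norm_num at hre
    linarith
  refine ⟨?_, hIV, ?_⟩
  · rcases eq_or_lt_of_le (sq_nonneg (hsNorm (A + B))) with h0 | h0
    · rw [← h0, div_zero, zero_mul]
      positivity
    · rw [div_mul_eq_mul_div, one_mul, div_le_iff₀ h0]
      nlinarith [mul_self_le_mul_self hT0 hIII]
  · nlinarith [mul_self_le_mul_self hT0 hIII, hd4, sq_nonneg (hsNorm (A - B)),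
      sq_nonneg (hsNorm (A + B))]
end

section
/- (Audenaert's inequality at t = 1/2) For positive semi-definite matrices M and N, Tr(√M √N) ≥ (1/2)·Tr(M + N − |M − N|), where |A| = √(A†A). -/
open Matrix
open scoped ComplexOrder

section AuxAud
variable {n : Type*} [Fintype n] [DecidableEq n]

private lemma aux_contOn (X : Matrix n n ℂ) (f : ℝ → ℝ) : ContinuousOn f (spectrum ℝ X) :=
  (Matrix.finite_real_spectrum (A := X)).continuousOn f

private lemma aux_trace_re_nonneg {P : Matrix n n ℂ} (hP : P.PosSemidef) : 0 ≤ P.trace.re := by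
  have h : ∀ i, 0 ≤ (P i i).re := fun i => by
    have := hP.re_dotProduct_nonneg (Pi.single i 1)
    simpa [mulVec_single, dotProduct, Pi.single_apply, Finset.sum_ite_eq] using this
  simp only [Matrix.trace, Matrix.diag, Complex.re_sum]
  exact Finset.sum_nonneg fun i _ => h i

private lemma aux_trace_mul_re_nonneg {P Q : Matrix n n ℂ} (hP : P.PosSemidef)
    (hQ : Q.PosSemidef) : 0 ≤ (P * Q).trace.re := by
  obtain ⟨X, rfl⟩ := (by open scoped MatrixOrder in exact CStarAlgebra.nonneg_iff_eq_star_mul_self.mp hP.nonneg : ∃ X : Matrix n n ℂ, P = Xᴴ * X)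
  obtain ⟨Y, rfl⟩ := (by open scoped MatrixOrder in exact CStarAlgebra.nonneg_iff_eq_star_mul_self.mp hQ.nonneg : ∃ Y : Matrix n n ℂ, Q = Yᴴ * Y)
  have h : (Xᴴ * X * (Yᴴ * Y)).trace = ((Y * Xᴴ)ᴴ * (Y * Xᴴ)).trace := by
    calc (Xᴴ * X * (Yᴴ * Y)).trace = (Xᴴ * (X * Yᴴ * Y)).trace := by
          simp only [mul_assoc]
      _ = ((X * Yᴴ * Y) * Xᴴ).trace := trace_mul_comm _ _
      _ = ((Y * Xᴴ)ᴴ * (Y * Xᴴ)).trace := by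
          rw [conjTranspose_mul, conjTranspose_conjTranspose]
          simp only [mul_assoc]
  rw [h]
  exact aux_trace_re_nonneg (posSemidef_conjTranspose_mul_self _)

private lemma aux_cfc_posSemidef {X : Matrix n n ℂ} (hX : X.IsHermitian) {f : ℝ → ℝ}
    (hf : ∀ x ∈ spectrum ℝ X, 0 ≤ f x) : (cfc f X).PosSemidef := by
  rw [hX.cfc_eq, Matrix.IsHermitian.cfc, Unitary.conjStarAlgAut_apply, star_eq_conjTranspose]
  refine (posSemidef_diagonal_iff.mpr fun i => ?_).mul_mul_conjTranspose_same _
  exact RCLike.ofReal_nonneg.mpr (hf _ (hX.eigenvalues_mem_spectrum_real i))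

private lemma aux_spec_nonneg {M : Matrix n n ℂ} (hM : M.PosSemidef) :
    ∀ x ∈ spectrum ℝ M, 0 ≤ x := by
  intro x hx
  rw [hM.1.spectrum_real_eq_range_eigenvalues] at hx
  obtain ⟨i, rfl⟩ := hx
  exact hM.eigenvalues_nonneg i

/-- positive part via cfc -/
noncomputable def auxPos (X : Matrix n n ℂ) : Matrix n n ℂ := cfc (fun r : ℝ => max r 0) X
/-- negative part via cfc -/
noncomputable def auxNeg (X : Matrix n n ℂ) : Matrix n n ℂ := cfc (fun r : ℝ => max (-r) 0) X
/-- sign via cfc -/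
noncomputable def auxSgn (X : Matrix n n ℂ) : Matrix n n ℂ :=
  cfc (fun r : ℝ => if r < 0 then (-1 : ℝ) else 1) X

private lemma auxPos_psd {X : Matrix n n ℂ} (hX : X.IsHermitian) : (auxPos X).PosSemidef :=
  aux_cfc_posSemidef hX fun x _ => le_max_right x 0

private lemma auxNeg_psd {X : Matrix n n ℂ} (hX : X.IsHermitian) : (auxNeg X).PosSemidef :=
  aux_cfc_posSemidef hX fun x _ => le_max_right (-x) 0

private lemma aux_pos_sub_neg {X : Matrix n n ℂ} (hX : X.IsHermitian) :
    auxPos X - auxNeg X = X := by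
  have hsa : IsSelfAdjoint X := hX
  rw [auxPos, auxNeg, ← cfc_sub _ _ X (aux_contOn X _) (aux_contOn X _)]
  rw [cfc_congr (g := fun x : ℝ => x) fun x _ => by
    rcases le_total x 0 with h | h
    · rw [max_eq_right h, max_eq_left (by linarith : (0:ℝ) ≤ -x)]; ring
    · rw [max_eq_left h, max_eq_right (by linarith : -x ≤ (0:ℝ))]; ring]
  exact cfc_id' ℝ X hsa

private lemma aux_sgn_key : ∀ r : ℝ,
    (if r < 0 then (-1 : ℝ) else 1) * r = max r 0 + max (-r) 0 := by
  intro r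
  rcases lt_or_ge r 0 with h | h
  · rw [if_pos h, max_eq_right h.le, max_eq_left (by linarith : (0:ℝ) ≤ -r)]; ring
  · rw [if_neg (not_lt.mpr h), max_eq_left h, max_eq_right (by linarith : -r ≤ (0:ℝ))]; ring

private lemma aux_sgn_mul {X : Matrix n n ℂ} (hX : X.IsHermitian) :
    auxSgn X * X = auxPos X + auxNeg X := by
  have hsa : IsSelfAdjoint X := hX
  have h1 : cfc (fun r : ℝ => if r < 0 then (-1:ℝ) else 1) X * cfc (fun r : ℝ => r) X
      = cfc (fun r : ℝ => (if r < 0 then (-1:ℝ) else 1) * r) X :=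
    (cfc_mul _ _ X (aux_contOn X _) (aux_contOn X _)).symm
  rw [cfc_id' ℝ X hsa] at h1
  rw [auxSgn, h1, auxPos, auxNeg, ← cfc_add X _ _ (aux_contOn X _) (aux_contOn X _)]
  exact cfc_congr fun x _ => aux_sgn_key x

private lemma aux_mul_sgn {X : Matrix n n ℂ} (hX : X.IsHermitian) :
    X * auxSgn X = auxPos X + auxNeg X := by
  have hsa : IsSelfAdjoint X := hX
  have h1 : cfc (fun r : ℝ => r) X * cfc (fun r : ℝ => if r < 0 then (-1:ℝ) else 1) X
      = cfc (fun r : ℝ => r * (if r < 0 then (-1:ℝ) else 1)) X :=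
    (cfc_mul _ _ X (aux_contOn X _) (aux_contOn X _)).symm
  rw [cfc_id' ℝ X hsa] at h1
  rw [auxSgn, h1, auxPos, auxNeg, ← cfc_add X _ _ (aux_contOn X _) (aux_contOn X _)]
  exact cfc_congr fun x _ => by rw [mul_comm]; exact aux_sgn_key x

private lemma aux_one_sub_sgn_psd {X : Matrix n n ℂ} (hX : X.IsHermitian) :
    ((1 : Matrix n n ℂ) - auxSgn X).PosSemidef := by
  have hsa : IsSelfAdjoint X := hX
  have h1 : cfc (fun r : ℝ => 1 - (if r < 0 then (-1:ℝ) else 1)) X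
      = cfc (fun _ : ℝ => (1:ℝ)) X - cfc (fun r : ℝ => if r < 0 then (-1:ℝ) else 1) X :=
    cfc_sub _ _ X (aux_contOn X _) (aux_contOn X _)
  rw [cfc_const_one ℝ X hsa] at h1
  rw [auxSgn, ← h1]
  exact aux_cfc_posSemidef hX fun x _ => by split_ifs <;> norm_num

private lemma aux_one_add_sgn_psd {X : Matrix n n ℂ} (hX : X.IsHermitian) :
    ((1 : Matrix n n ℂ) + auxSgn X).PosSemidef := by
  have hsa : IsSelfAdjoint X := hX
  have h1 : cfc (fun r : ℝ => 1 + (if r < 0 then (-1:ℝ) else 1)) X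
      = cfc (fun _ : ℝ => (1:ℝ)) X + cfc (fun r : ℝ => if r < 0 then (-1:ℝ) else 1) X :=
    cfc_add X _ _ (aux_contOn X _) (aux_contOn X _)
  rw [cfc_const_one ℝ X hsa] at h1
  rw [auxSgn, ← h1]
  exact aux_cfc_posSemidef hX fun x _ => by split_ifs <;> norm_num

private lemma aux_msqrt_abs {X : Matrix n n ℂ} (hX : X.IsHermitian) :
    msqrt (Xᴴ * X) = auxPos X + auxNeg X := by
  have hsa : IsSelfAdjoint X := hX
  have h1 : Xᴴ * X = cfc (fun r : ℝ => r * r) X := by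
    have h2 : cfc (fun r : ℝ => r * r) X = cfc (fun r : ℝ => r) X * cfc (fun r : ℝ => r) X :=
      cfc_mul _ _ X (aux_contOn X _) (aux_contOn X _)
    rw [cfc_id' ℝ X hsa] at h2
    rw [hX.eq]
    exact h2.symm
  unfold msqrt
  rw [h1, ← cfc_comp Real.sqrt (fun r : ℝ => r * r) X hsa
    (((Matrix.finite_real_spectrum (A := X)).image _).continuousOn _) (aux_contOn X _)]
  rw [auxPos, auxNeg, ← cfc_add X _ _ (aux_contOn X _) (aux_contOn X _)]
  refine cfc_congr fun x _ => ?_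
  show Real.sqrt (x * x) = max x 0 + max (-x) 0
  rw [Real.sqrt_mul_self_eq_abs]
  rcases le_total x 0 with h | h
  · rw [abs_of_nonpos h, max_eq_right h, max_eq_left (by linarith : (0:ℝ) ≤ -x)]; ring
  · rw [abs_of_nonneg h, max_eq_left h, max_eq_right (by linarith : -x ≤ (0:ℝ))]; ring

end AuxAud

theorem audenaert_half {n : Type*} [Fintype n] [DecidableEq n]
    (M N : Matrix n n ℂ) (hM : M.PosSemidef) (hN : N.PosSemidef) :
    (msqrt M * msqrt N).trace.re ≥
      (1 / 2) * (M.trace.re + N.trace.re - (msqrt ((M - N)ᴴ * (M - N))).trace.re) := by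
  have hMh : M.IsHermitian := hM.1
  have hNh : N.IsHermitian := hN.1
  have hMsa : IsSelfAdjoint M := hMh
  have hNsa : IsSelfAdjoint N := hNh
  set A := msqrt M with hAdef
  set B := msqrt N with hBdef
  set D := M - N with hDdef
  have hA : A.PosSemidef := by
    rw [hAdef]; unfold msqrt
    exact aux_cfc_posSemidef hMh fun x _ => Real.sqrt_nonneg x
  have hB : B.PosSemidef := by
    rw [hBdef]; unfold msqrt
    exact aux_cfc_posSemidef hNh fun x _ => Real.sqrt_nonneg x
  have hAA : A * A = M := by
    rw [hAdef]; unfold msqrt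
    rw [← cfc_mul Real.sqrt Real.sqrt M (aux_contOn M _) (aux_contOn M _),
      cfc_congr (g := fun x : ℝ => x) fun x hx => Real.mul_self_sqrt (aux_spec_nonneg hM x hx)]
    exact cfc_id' ℝ M hMsa
  have hBB : B * B = N := by
    rw [hBdef]; unfold msqrt
    rw [← cfc_mul Real.sqrt Real.sqrt N (aux_contOn N _) (aux_contOn N _),
      cfc_congr (g := fun x : ℝ => x) fun x hx => Real.mul_self_sqrt (aux_spec_nonneg hN x hx)]
    exact cfc_id' ℝ N hNsa
  set C := A - B with hCdef
  have hCh : C.IsHermitian := by rw [hCdef]; exact hA.1.sub hB.1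
  have hDh : D.IsHermitian := by rw [hDdef]; exact hMh.sub hNh
  -- abbreviations
  have hCp := auxPos_psd hCh
  have hCm := auxNeg_psd hCh
  have hDp := auxPos_psd hDh
  have hDm := auxNeg_psd hDh
  have hCpm : auxPos C - auxNeg C = C := aux_pos_sub_neg hCh
  have hDpm : auxPos D - auxNeg D = D := aux_pos_sub_neg hDh
  have hUC : auxSgn C * C = auxPos C + auxNeg C := aux_sgn_mul hCh
  have hCU : C * auxSgn C = auxPos C + auxNeg C := aux_mul_sgn hCh
  have h1mU : ((1 : Matrix n n ℂ) - auxSgn C).PosSemidef := aux_one_sub_sgn_psd hCh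
  have h1pU : ((1 : Matrix n n ℂ) + auxSgn C).PosSemidef := aux_one_add_sgn_psd hCh
  have habs : msqrt (Dᴴ * D) = auxPos D + auxNeg D := aux_msqrt_abs hDh
  -- matrix identities
  have E0 : C * C + (A * B + B * A) = M + N := by
    rw [hCdef, ← hAA, ← hBB]; noncomm_ring
  have E1 : (auxPos C + auxNeg C) * (A + B)
      = C * C + ((auxNeg C * A + auxNeg C * A) + (auxPos C * B + auxPos C * B)) := by
    have h : auxPos C = C + auxNeg C := sub_eq_iff_eq_add.mp hCpm
    rw [h, hCdef]; noncomm_ring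
  have E2 : C * (A + B) + (A + B) * C = D + D := by
    rw [hCdef, hDdef, ← hAA, ← hBB]; noncomm_ring
  have E3 : auxSgn C * (C * (A + B)) + auxSgn C * ((A + B) * C)
      = auxSgn C * D + auxSgn C * D := by
    rw [← mul_add, E2, mul_add]
  have F1 : auxSgn C * (C * (A + B)) = (auxPos C + auxNeg C) * (A + B) := by
    rw [← mul_assoc, hUC]
  have F2 : (auxSgn C * ((A + B) * C)).trace = ((auxPos C + auxNeg C) * (A + B)).trace := by
    rw [trace_mul_comm, mul_assoc, hCU, trace_mul_comm]
  have E4 : auxSgn C * D = auxSgn C * auxPos D - auxSgn C * auxNeg D := by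
    rw [← mul_sub, hDpm]
  have E5 : ((1 : Matrix n n ℂ) - auxSgn C) * auxPos D = auxPos D - auxSgn C * auxPos D := by
    rw [sub_mul, one_mul]
  have E6 : ((1 : Matrix n n ℂ) + auxSgn C) * auxNeg D = auxNeg D + auxSgn C * auxNeg D := by
    rw [add_mul, one_mul]
  -- trace inequalities
  have i1 : 0 ≤ (auxNeg C * A).trace.re := aux_trace_mul_re_nonneg hCm hA
  have i2 : 0 ≤ (auxPos C * B).trace.re := aux_trace_mul_re_nonneg hCp hB
  have i3 : 0 ≤ (((1 : Matrix n n ℂ) - auxSgn C) * auxPos D).trace.re :=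
    aux_trace_mul_re_nonneg h1mU hDp
  have i4 : 0 ≤ (((1 : Matrix n n ℂ) + auxSgn C) * auxNeg D).trace.re :=
    aux_trace_mul_re_nonneg h1pU hDm
  have idp : 0 ≤ (auxPos D).trace.re := aux_trace_re_nonneg hDp
  have idm : 0 ≤ (auxNeg D).trace.re := aux_trace_re_nonneg hDm
  -- pass to real parts
  have tBA : ((B * A).trace).re = ((A * B).trace).re := by rw [trace_mul_comm]
  have t0 := congrArg (fun X : Matrix n n ℂ => X.trace.re) E0
  have t1 := congrArg (fun X : Matrix n n ℂ => X.trace.re) E1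
  have t3 := congrArg (fun X : Matrix n n ℂ => X.trace.re) E3
  have t4 := congrArg (fun X : Matrix n n ℂ => X.trace.re) E4
  have t5 := congrArg (fun X : Matrix n n ℂ => X.trace.re) E5
  have t6 := congrArg (fun X : Matrix n n ℂ => X.trace.re) E6
  have tF1 := congrArg (fun X : Matrix n n ℂ => X.trace.re) F1
  have tF2 := congrArg Complex.re F2
  simp only [trace_add, trace_sub, Complex.add_re, Complex.sub_re] at t0 t1 t3 t4 t5 t6 tF1 tF2
  rw [habs]
  simp only [trace_add, Complex.add_re]
  rw [E5] at i3
  rw [E6] at i4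
  simp only [trace_add, trace_sub, Complex.add_re, Complex.sub_re] at i3 i4
  linarith
end

section
/- For a tripartite density matrix ρ_{ABC} with positive definite marginals, I(A:C|B)_ρ ≥ −2 log Tr(√ρ_{ABC} · √(exp(log ρ_{AB} + log ρ_{BC} − log ρ_B))). -/
open Matrix
open scoped ComplexOrder

variable {A B C : Type*}

/-- partial trace over C -/
noncomputable def margAB [Fintype C] (ρ : Matrix (A × B × C) (A × B × C) ℂ) :
    Matrix (A × B) (A × B) ℂ :=
  fun p q => ∑ c, ρ (p.1, p.2, c) (q.1, q.2, c)

/-- partial trace over A -/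
noncomputable def margBC [Fintype A] (ρ : Matrix (A × B × C) (A × B × C) ℂ) :
    Matrix (B × C) (B × C) ℂ :=
  fun p q => ∑ a, ρ (a, p.1, p.2) (a, q.1, q.2)

/-- partial trace over A and C -/
noncomputable def margB [Fintype A] [Fintype C] (ρ : Matrix (A × B × C) (A × B × C) ℂ) :
    Matrix B B ℂ :=
  fun b b' => ∑ a, ∑ c, ρ (a, b, c) (a, b', c)

/-- X ↦ X ⊗ 1_C on the full space -/
noncomputable def embAB [DecidableEq C] (X : Matrix (A × B) (A × B) ℂ) :
    Matrix (A × B × C) (A × B × C) ℂ :=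
  fun x y => X (x.1, x.2.1) (y.1, y.2.1) * (if x.2.2 = y.2.2 then 1 else 0)

/-- X ↦ 1_A ⊗ X on the full space -/
noncomputable def embBC [DecidableEq A] (X : Matrix (B × C) (B × C) ℂ) :
    Matrix (A × B × C) (A × B × C) ℂ :=
  fun x y => (if x.1 = y.1 then 1 else 0) * X x.2 y.2

/-- X ↦ 1_A ⊗ X ⊗ 1_C on the full space -/
noncomputable def embB [DecidableEq A] [DecidableEq C] (X : Matrix B B ℂ) :
    Matrix (A × B × C) (A × B × C) ℂ :=
  fun x y => (if x.1 = y.1 then 1 else 0) * X x.2.1 y.2.1 * (if x.2.2 = y.2.2 then 1 else 0)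

variable [Fintype A] [Fintype B] [Fintype C] [DecidableEq A] [DecidableEq B] [DecidableEq C]

/-- log ρ_AB + log ρ_BC − log ρ_B, implicitly tensored with identities -/
noncomputable def logSum (ρ : Matrix (A × B × C) (A × B × C) ℂ) :
    Matrix (A × B × C) (A × B × C) ℂ :=
  embAB (matLog (margAB ρ)) + embBC (matLog (margBC ρ)) - embB (matLog (margB ρ))

/-- conditional mutual information I(A:C|B) -/
noncomputable def condMI (ρ : Matrix (A × B × C) (A × B × C) ℂ) : ℝ :=
  vnEnt (margAB ρ) + vnEnt (margBC ρ) - vnEnt ρ - vnEnt (margB ρ)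


section Helpers

open scoped ComplexOrder

variable {n : Type*} [Fintype n] [DecidableEq n] {M N : Matrix n n ℂ}

lemma continuousOn_of_finite (f : ℝ → ℝ) {s : Set ℝ} (hs : s.Finite) : ContinuousOn f s := by
  have : DiscreteTopology s := hs.instDiscreteTopology
  rw [continuousOn_iff_continuous_restrict]
  exact continuous_of_discreteTopology

lemma trace_conj_diag_pair (U V : Matrix n n ℂ) (a b : n → ℝ) :
    (U * diagonal (Complex.ofReal ∘ a) * Uᴴ * (V * diagonal (Complex.ofReal ∘ b) * Vᴴ)).trace
      = ↑(∑ i, ∑ j, a i * b j * Complex.normSq ((Uᴴ * V) i j)) := by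
  have h1 : (U * diagonal (Complex.ofReal ∘ a) * Uᴴ * (V * diagonal (Complex.ofReal ∘ b) * Vᴴ)).trace
      = (diagonal (Complex.ofReal ∘ a) * (Uᴴ * V) * (diagonal (Complex.ofReal ∘ b) * (Vᴴ * U))).trace := by
    rw [show (U * diagonal (Complex.ofReal ∘ a) * Uᴴ * (V * diagonal (Complex.ofReal ∘ b) * Vᴴ))
        = U * (diagonal (Complex.ofReal ∘ a) * Uᴴ * (V * diagonal (Complex.ofReal ∘ b) * Vᴴ)) by
          simp [mul_assoc], trace_mul_comm]
    simp [mul_assoc]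
  rw [h1]
  have hconj : ∀ i j, (Vᴴ * U) j i = starRingEnd ℂ ((Uᴴ * V) i j) := by
    intro i j
    simp [mul_apply, Finset.mul_sum, map_sum, mul_comm]
  generalize hM : Uᴴ * V = M at *
  generalize hN : Vᴴ * U = N at *
  have key : ∀ i j, (diagonal (Complex.ofReal ∘ a) * M) i j = ↑(a i) * M i j := by
    intro i j; rw [diagonal_mul]; rfl
  have key2 : ∀ i j, (diagonal (Complex.ofReal ∘ b) * N) i j = ↑(b i) * N i j := by
    intro i j; rw [diagonal_mul]; rfl
  simp only [trace, diag, mul_apply (M := diagonal (Complex.ofReal ∘ a) * M), key, key2, hconj, Complex.mul_conj']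
  push_cast
  refine Finset.sum_congr rfl fun i _ => Finset.sum_congr rfl fun j _ => ?_
  rw [mul_assoc, mul_assoc, mul_comm (M i j), mul_assoc, ← Complex.normSq_eq_conj_mul_self]

lemma cfc_triple (hM : M.IsHermitian) (f : ℝ → ℝ) :
    cfc f M = (hM.eigenvectorUnitary : Matrix n n ℂ) *
      diagonal (Complex.ofReal ∘ f ∘ hM.eigenvalues) *
      (hM.eigenvectorUnitary : Matrix n n ℂ)ᴴ := by
  rw [hM.cfc_eq, Matrix.IsHermitian.cfc, ← star_eq_conjTranspose]
  rfl

lemma mexp_eq_cfc (hM : M.IsHermitian) : mexp M = cfc Real.exp M := by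
  set U : Matrix n n ℂ := (hM.eigenvectorUnitary : Matrix n n ℂ) with hU
  have hUU : U * star U = 1 := mem_unitaryGroup_iff.mp hM.eigenvectorUnitary.2
  have hUnit : IsUnit U := ⟨Unitary.toUnits hM.eigenvectorUnitary, rfl⟩
  have hinv : U⁻¹ = star U := inv_eq_right_inv hUU
  rw [cfc_triple hM Real.exp, mexp]
  conv_lhs => rw [hM.spectral_theorem, Unitary.conjStarAlgAut_apply]
  rw [← hU, ← hinv, Matrix.exp_conj U _ hUnit, Matrix.exp_diagonal, hinv,
    star_eq_conjTranspose]
  congr 1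
  congr 1
  funext i
  rw [Pi.exp_def]
  simp [Function.comp, ← Complex.exp_eq_exp_ℂ, ← Complex.ofReal_exp]
  rfl

lemma matLog_mexp (hM : M.IsHermitian) : matLog (mexp M) = M := by
  rw [mexp_eq_cfc hM, matLog]
  have hcomp := cfc_comp Real.log Real.exp M hM
    (continuousOn_of_finite _ ((Matrix.finite_real_spectrum (A := M)).image _))
    (continuousOn_of_finite _ (Matrix.finite_real_spectrum (A := M)))
  rw [← hcomp]
  calc cfc (Real.log ∘ Real.exp) M = cfc (id : ℝ → ℝ) M :=
        cfc_congr fun x _ => Real.log_exp x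
    _ = M := cfc_id ℝ M hM

lemma trace_cfc_cfc (hM : M.IsHermitian) (hN : N.IsHermitian) (f g : ℝ → ℝ) :
    (cfc f M * cfc g N).trace = ↑(∑ i, ∑ j, f (hM.eigenvalues i) * g (hN.eigenvalues j) *
      Complex.normSq (((hM.eigenvectorUnitary : Matrix n n ℂ)ᴴ *
        (hN.eigenvectorUnitary : Matrix n n ℂ)) i j)) := by
  rw [cfc_triple hM f, cfc_triple hN g,
    trace_conj_diag_pair _ _ (f ∘ hM.eigenvalues) (g ∘ hN.eigenvalues)]
  rfl

lemma rowsum_normSq_one {U V : Matrix n n ℂ} (hU : U ∈ Matrix.unitaryGroup n ℂ)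
    (hV : V ∈ Matrix.unitaryGroup n ℂ) (i : n) :
    ∑ j, Complex.normSq ((Uᴴ * V) i j) = 1 := by
  have hVV : V * Vᴴ = 1 := by
    rw [← star_eq_conjTranspose]; exact mem_unitaryGroup_iff.mp hV
  have hUU : Uᴴ * U = 1 := by
    rw [← star_eq_conjTranspose]; exact mem_unitaryGroup_iff'.mp hU
  have key : ((Uᴴ * V) * (Uᴴ * V)ᴴ) i i = 1 := by
    rw [conjTranspose_mul, conjTranspose_conjTranspose,
      show Uᴴ * V * (Vᴴ * U) = Uᴴ * (V * Vᴴ) * U by simp [mul_assoc], hVV, mul_one, hUU,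
      one_apply_eq]
  have expand : ((Uᴴ * V) * (Uᴴ * V)ᴴ) i i = ↑(∑ j, Complex.normSq ((Uᴴ * V) i j)) := by
    push_cast
    rw [mul_apply]
    refine Finset.sum_congr rfl fun j _ => ?_
    rw [conjTranspose_apply, mul_comm,
      show (star ((Uᴴ * V) i j)) = starRingEnd ℂ ((Uᴴ * V) i j) from rfl,
      ← Complex.normSq_eq_conj_mul_self]
  rw [expand] at key
  exact_mod_cast key

lemma trace_eq_sum_eigenvalues (hM : M.IsHermitian) :
    M.trace = ↑(∑ i, hM.eigenvalues i) := by
  have hUU : star (hM.eigenvectorUnitary : Matrix n n ℂ) * (hM.eigenvectorUnitary : Matrix n n ℂ)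
      = 1 := mem_unitaryGroup_iff'.mp hM.eigenvectorUnitary.2
  conv_lhs => rw [hM.spectral_theorem, Unitary.conjStarAlgAut_apply]
  rw [trace_mul_cycle, hUU, one_mul, trace_diagonal]
  push_cast
  rfl

lemma scalar_key (p q : n → ℝ) (c : n → n → ℝ)
    (hp : ∀ i, 0 < p i) (hq : ∀ j, 0 < q j) (hc : ∀ i j, 0 ≤ c i j)
    (hrow : ∀ i, ∑ j, c i j = 1) (hsum : ∑ i, p i = 1) :
    (∑ i, p i * Real.log (p i)) - (∑ i, ∑ j, p i * Real.log (q j) * c i j)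
      ≥ -2 * Real.log (∑ i, ∑ j, Real.sqrt (p i) * Real.sqrt (q j) * c i j) := by
  set w : n × n → ℝ := fun z => p z.1 * c z.1 z.2 with hw
  set x : n × n → ℝ := fun z => Real.sqrt (q z.2) / Real.sqrt (p z.1) with hx
  have h₀ : ∀ z ∈ Finset.univ (α := n × n), 0 ≤ w z :=
    fun z _ => mul_nonneg (hp z.1).le (hc z.1 z.2)
  have h₁ : ∑ z, w z = 1 := by
    rw [Fintype.sum_prod_type]
    simp only [hw, ← Finset.mul_sum, hrow, mul_one]
    exact hsum
  have hmem : ∀ z ∈ Finset.univ (α := n × n), x z ∈ Set.Ioi (0:ℝ) :=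
    fun z _ => div_pos (Real.sqrt_pos.mpr (hq z.2)) (Real.sqrt_pos.mpr (hp z.1))
  have J := (strictConcaveOn_log_Ioi.concaveOn).le_map_sum h₀ h₁ hmem
  have hT : ∑ z, w z • x z = ∑ i, ∑ j, Real.sqrt (p i) * Real.sqrt (q j) * c i j := by
    rw [Fintype.sum_prod_type]
    refine Finset.sum_congr rfl fun i _ => Finset.sum_congr rfl fun j _ => ?_
    have h2 : p i / Real.sqrt (p i) = Real.sqrt (p i) := Real.div_sqrt
    show (p i * c i j) * (Real.sqrt (q j) / Real.sqrt (p i)) = _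
    calc (p i * c i j) * (Real.sqrt (q j) / Real.sqrt (p i))
        = (p i / Real.sqrt (p i)) * Real.sqrt (q j) * c i j := by ring
      _ = _ := by rw [h2]
  have hS : ∑ z, w z • Real.log (x z)
      = (1/2) * ((∑ i, ∑ j, p i * Real.log (q j) * c i j) - ∑ i, p i * Real.log (p i)) := by
    rw [Fintype.sum_prod_type]
    have : ∀ i j, w (i, j) • Real.log (x (i, j))
        = (1/2) * (p i * Real.log (q j) * c i j) - (1/2) * (p i * Real.log (p i) * c i j) := by
      intro i j
      have hlog : Real.log (Real.sqrt (q j) / Real.sqrt (p i))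
          = (1/2) * Real.log (q j) - (1/2) * Real.log (p i) := by
        rw [Real.log_div (Real.sqrt_ne_zero'.mpr (hq j)) (Real.sqrt_ne_zero'.mpr (hp i)),
          Real.log_sqrt (hq j).le, Real.log_sqrt (hp i).le]
        ring
      simp only [hw, hx, smul_eq_mul, hlog]
      ring
    simp only [this, Finset.sum_sub_distrib, ← Finset.mul_sum]
    simp only [hrow, mul_one]
    ring
  rw [hT, hS] at J
  linarith [J]

/-- Key quantum inequality: D(ρ‖σ) ≥ −2 log Tr(√ρ √σ). -/
lemma quantum_key (ρ σ : Matrix n n ℂ) (hρ : ρ.PosDef) (hσH : σ.IsHermitian)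
    (hσpos : ∀ j, 0 < hσH.eigenvalues j) (h1 : ρ.trace = 1) :
    (ρ * matLog ρ).trace.re - (ρ * matLog σ).trace.re
      ≥ -2 * Real.log ((msqrt ρ * msqrt σ).trace.re) := by
  have hρH : ρ.IsHermitian := hρ.1
  set p : n → ℝ := hρH.eigenvalues with hpdef
  set q : n → ℝ := hσH.eigenvalues with hqdef
  set c : n → n → ℝ := fun i j => Complex.normSq (((hρH.eigenvectorUnitary : Matrix n n ℂ)ᴴ *
    (hσH.eigenvectorUnitary : Matrix n n ℂ)) i j) with hcdef
  have hp : ∀ i, 0 < p i := hρ.eigenvalues_pos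
  have hrow : ∀ i, ∑ j, c i j = 1 := fun i =>
    rowsum_normSq_one hρH.eigenvectorUnitary.2 hσH.eigenvectorUnitary.2 i
  have hsum : ∑ i, p i = 1 := by
    have := trace_eq_sum_eigenvalues hρH
    rw [h1] at this
    exact_mod_cast this.symm
  have hid : cfc (id : ℝ → ℝ) ρ = ρ := cfc_id ℝ ρ hρH.isSelfAdjoint
  have hlogσ : (ρ * matLog σ).trace = ↑(∑ i, ∑ j, p i * Real.log (q j) * c i j) := by
    have h := trace_cfc_cfc hρH hσH id Real.log
    rw [hid] at h
    rw [matLog, h]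
    rfl
  have hlogρ : (ρ * matLog ρ).trace = ↑(∑ i, p i * Real.log (p i)) := by
    have h := trace_cfc_cfc hρH hρH id Real.log
    rw [hid] at h
    rw [matLog, h]
    norm_cast
    refine Finset.sum_congr rfl fun i _ => ?_
    have hone : ((hρH.eigenvectorUnitary : Matrix n n ℂ)ᴴ *
        (hρH.eigenvectorUnitary : Matrix n n ℂ)) = 1 := by
      rw [← star_eq_conjTranspose]
      exact mem_unitaryGroup_iff'.mp hρH.eigenvectorUnitary.2
    rw [show (∑ j, id (p i) * Real.log (p j) * Complex.normSq (((hρH.eigenvectorUnitary :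
        Matrix n n ℂ)ᴴ * (hρH.eigenvectorUnitary : Matrix n n ℂ)) i j))
        = ∑ j, p i * Real.log (p j) * Complex.normSq ((1 : Matrix n n ℂ) i j) by rw [hone]; rfl]
    rw [Finset.sum_eq_single i]
    · simp
    · intro j _ hji
      rw [one_apply_ne' hji]
      simp
    · simp
  have hsqrt : (msqrt ρ * msqrt σ).trace
      = ↑(∑ i, ∑ j, Real.sqrt (p i) * Real.sqrt (q j) * c i j) := by
    rw [msqrt, msqrt]
    exact trace_cfc_cfc hρH hσH Real.sqrt Real.sqrt
  rw [hlogσ, hlogρ, hsqrt]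
  simp only [Complex.ofReal_re]
  exact scalar_key p q c hp hσpos (fun i j => Complex.normSq_nonneg _) hrow hsum

end Helpers

section Emb

variable {A B C : Type*} [Fintype A] [Fintype B] [Fintype C]
  [DecidableEq A] [DecidableEq B] [DecidableEq C]

lemma trace_embAB (ρ : Matrix (A × B × C) (A × B × C) ℂ) (X : Matrix (A × B) (A × B) ℂ) :
    (ρ * embAB X).trace = (margAB ρ * X).trace := by
  simp only [trace, diag, mul_apply, embAB, margAB, Fintype.sum_prod_type,
    mul_ite, mul_one, mul_zero, Finset.sum_ite_eq', Finset.mem_univ, if_true,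
    Finset.sum_mul, Finset.mul_sum]
  refine Finset.sum_congr rfl fun a _ => Finset.sum_congr rfl fun b _ => ?_
  rw [Finset.sum_comm]
  refine Finset.sum_congr rfl fun a' _ => ?_
  rw [Finset.sum_comm]

lemma trace_embBC (ρ : Matrix (A × B × C) (A × B × C) ℂ) (X : Matrix (B × C) (B × C) ℂ) :
    (ρ * embBC X).trace = (margBC ρ * X).trace := by
  simp only [trace, diag, mul_apply, embBC, margBC, Fintype.sum_prod_type,
    mul_ite, ite_mul, mul_one, mul_zero, one_mul, zero_mul,
    Finset.sum_ite_irrel, Finset.sum_const_zero,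
    Finset.sum_ite_eq', Finset.sum_ite_eq, Finset.mem_univ, if_true,
    Finset.sum_mul, Finset.mul_sum]
  refine Finset.sum_comm.trans ?_
  refine Finset.sum_congr rfl fun b _ => ?_
  refine Finset.sum_comm.trans ?_
  refine Finset.sum_congr rfl fun c _ => ?_
  refine Finset.sum_comm.trans ?_
  refine Finset.sum_congr rfl fun b' _ => ?_
  exact Finset.sum_comm

lemma trace_embB (ρ : Matrix (A × B × C) (A × B × C) ℂ) (X : Matrix B B ℂ) :
    (ρ * embB X).trace = (margB ρ * X).trace := by
  simp only [trace, diag, mul_apply, embB, margB, Fintype.sum_prod_type,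
    mul_ite, ite_mul, mul_one, mul_zero, one_mul, zero_mul,
    Finset.sum_ite_irrel, Finset.sum_const_zero,
    Finset.sum_ite_eq', Finset.sum_ite_eq, Finset.mem_univ, if_true,
    Finset.sum_mul, Finset.mul_sum]
  refine Finset.sum_comm.trans ?_
  refine Finset.sum_congr rfl fun b _ => ?_
  refine (Finset.sum_congr rfl fun a _ => Finset.sum_comm).trans ?_
  exact Finset.sum_comm

lemma embAB_herm {X : Matrix (A × B) (A × B) ℂ} (hX : X.IsHermitian) :
    (embAB X : Matrix (A × B × C) (A × B × C) ℂ).IsHermitian := by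
  ext x y
  simp only [conjTranspose_apply, embAB, star_mul']
  have hstar : star (X (y.1, y.2.1) (x.1, x.2.1)) = X (x.1, x.2.1) (y.1, y.2.1) := by
    rw [← conjTranspose_apply, hX]
  by_cases h : x.2.2 = y.2.2
  · simp [h, hstar]
  · simp [h, show ¬ y.2.2 = x.2.2 from fun hh => h hh.symm]

lemma embBC_herm {X : Matrix (B × C) (B × C) ℂ} (hX : X.IsHermitian) :
    (embBC X : Matrix (A × B × C) (A × B × C) ℂ).IsHermitian := by
  ext x y
  simp only [conjTranspose_apply, embBC, star_mul']
  have hstar : star (X y.2 x.2) = X x.2 y.2 := by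
    rw [← conjTranspose_apply, hX]
  by_cases h : x.1 = y.1
  · simp [h, hstar]
  · simp [h, show ¬ y.1 = x.1 from fun hh => h hh.symm]

lemma embB_herm {X : Matrix B B ℂ} (hX : X.IsHermitian) :
    (embB X : Matrix (A × B × C) (A × B × C) ℂ).IsHermitian := by
  ext x y
  simp only [conjTranspose_apply, embB, star_mul']
  have hstar : star (X y.2.1 x.2.1) = X x.2.1 y.2.1 := by
    rw [← conjTranspose_apply, hX]
  by_cases h : x.1 = y.1
  · by_cases h2 : x.2.2 = y.2.2
    · simp [h, h2, hstar]
    · simp [h2, show ¬ y.2.2 = x.2.2 from fun hh => h2 hh.symm]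
  · simp [h, show ¬ y.1 = x.1 from fun hh => h hh.symm]

lemma matLog_herm {n : Type*} [Fintype n] [DecidableEq n] (M : Matrix n n ℂ) :
    (matLog M).IsHermitian := by
  rw [matLog]
  have h : _root_.IsSelfAdjoint (cfc Real.log M) := cfc_predicate Real.log M
  exact h

end Emb

theorem condMI_ge_neg_two_log (ρ : Matrix (A × B × C) (A × B × C) ℂ)
    (hρ : ρ.PosDef) (h1 : ρ.trace = 1)
    (hAB : (margAB ρ).PosDef) (hBC : (margBC ρ).PosDef) (hB : (margB ρ).PosDef) :
    condMI ρ ≥ -2 * Real.log ((msqrt ρ * msqrt (mexp (logSum ρ))).trace.re) := by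
  classical
  set H : Matrix (A × B × C) (A × B × C) ℂ := logSum ρ with hHdef
  have hH : H.IsHermitian :=
    ((embAB_herm (matLog_herm _)).add (embBC_herm (matLog_herm _))).sub
      (embB_herm (matLog_herm _))
  have hσcfc : mexp H = cfc Real.exp H := mexp_eq_cfc hH
  have hσH : (mexp H).IsHermitian := by
    rw [hσcfc]
    exact (cfc_predicate Real.exp H : _root_.IsSelfAdjoint _)
  have hσpos : ∀ j, 0 < hσH.eigenvalues j := by
    intro j
    have hmem : hσH.eigenvalues j ∈ spectrum ℝ (mexp H) := by
      rw [Matrix.IsHermitian.spectrum_real_eq_range_eigenvalues hσH]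
      exact Set.mem_range_self j
    have hspec : spectrum ℝ (mexp H) = Real.exp '' spectrum ℝ H := by
      rw [hσcfc]
      exact cfc_map_spectrum Real.exp H hH
        (continuousOn_of_finite _ (Matrix.finite_real_spectrum (A := H)))
    rw [hspec] at hmem
    obtain ⟨x, -, hx⟩ := hmem
    rw [← hx]
    exact Real.exp_pos x
  have hlog : matLog (mexp H) = H := matLog_mexp hH
  have hsplit : (ρ * H).trace = (margAB ρ * matLog (margAB ρ)).trace
      + (margBC ρ * matLog (margBC ρ)).trace - (margB ρ * matLog (margB ρ)).trace := by
    rw [hHdef, logSum, mul_sub, mul_add, trace_sub, trace_add,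
      trace_embAB, trace_embBC, trace_embB]
  have hkey := quantum_key ρ (mexp H) hρ hσH hσpos h1
  rw [hlog] at hkey
  have hre : condMI ρ = (ρ * matLog ρ).trace.re - (ρ * H).trace.re := by
    rw [condMI, vnEnt, vnEnt, vnEnt, vnEnt, hsplit]
    simp only [Complex.add_re, Complex.sub_re]
    ring
  rw [hre]
  exact hkey
end

section
/- For density matrices ρ, σ with supp(ρ) ⊆ supp(σ) and a quantum channel Φ, S(ρ‖σ) − S(Φ(ρ)‖Φ(σ)) ≥ −2 log Tr(√ρ · √(exp(log σ + Φ*(log Φ(ρ)) − Φ*(log Φ(σ))))), where Φ* is the adjoint of Φ with respect to the Hilbert–Schmidt inner product. -/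
open Matrix
open scoped ComplexOrder

/-- quantum relative entropy S(ρ‖σ) = Tr(ρ(log ρ − log σ)) -/
noncomputable def relEnt {n : Type*} [Fintype n] [DecidableEq n]
    (ρ σ : Matrix n n ℂ) : ℝ :=
  (ρ * (matLog ρ - matLog σ)).trace.re

section Helpers

variable {n : Type*} [Fintype n] [DecidableEq n]

lemma contOn_finite {s : Set ℝ} (hs : s.Finite) (f : ℝ → ℝ) : ContinuousOn f s := by
  rw [continuousOn_iff_continuous_restrict]
  haveI : Finite s := hs
  haveI : DiscreteTopology s := by infer_instance
  exact continuous_of_discreteTopology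

lemma matContOn (A : Matrix n n ℂ) (f : ℝ → ℝ) : ContinuousOn f (spectrum ℝ A) :=
  contOn_finite A.finite_real_spectrum f

lemma trace_cfc' {A : Matrix n n ℂ} (hA : A.IsHermitian) (f : ℝ → ℝ) :
    (cfc f A).trace = ∑ i, (f (hA.eigenvalues i) : ℂ) := by
  rw [hA.cfc_eq, Matrix.IsHermitian.cfc, Unitary.conjStarAlgAut_apply, Matrix.trace_mul_comm, ← Matrix.mul_assoc,
    Unitary.star_mul_self_of_mem (SetLike.coe_mem _), one_mul, Matrix.trace_diagonal]
  rfl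

lemma trace_cfc_mul_cfc {A B : Matrix n n ℂ} (hA : A.IsHermitian) (hB : B.IsHermitian)
    (f g : ℝ → ℝ) :
    (cfc f A * cfc g B).trace = ∑ i, ∑ j, ((f (hA.eigenvalues i) * g (hB.eigenvalues j) *
      ‖((star (hA.eigenvectorUnitary : Matrix n n ℂ) *
        (hB.eigenvectorUnitary : Matrix n n ℂ)) i j)‖ ^ 2 : ℝ) : ℂ) := by
  set U := (hA.eigenvectorUnitary : Matrix n n ℂ) with hU
  set V := (hB.eigenvectorUnitary : Matrix n n ℂ) with hV
  set W : Matrix n n ℂ := star U * V with hWdef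
  set Df : Matrix n n ℂ := diagonal (RCLike.ofReal ∘ f ∘ hA.eigenvalues) with hDf
  set Dg : Matrix n n ℂ := diagonal (RCLike.ofReal ∘ g ∘ hB.eigenvalues) with hDg
  have hsWU : star V * U = star W := by rw [hWdef, StarMul.star_mul, star_star]
  have h1 : (cfc f A * cfc g B).trace = (Df * (W * (Dg * star W))).trace := by
    rw [hA.cfc_eq, hB.cfc_eq, Matrix.IsHermitian.cfc, Matrix.IsHermitian.cfc,
      Unitary.conjStarAlgAut_apply, Unitary.conjStarAlgAut_apply, ← hU, ← hV,
      ← hDf, ← hDg]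
    rw [show U * Df * star U * (V * Dg * star V) = U * (Df * (star U * V * (Dg * star V)))
      from by simp only [Matrix.mul_assoc]]
    rw [Matrix.trace_mul_comm]
    simp only [Matrix.mul_assoc, hsWU, ← hWdef]
  rw [h1, Matrix.trace]
  apply Finset.sum_congr rfl
  intro i _
  rw [Matrix.diag_apply, Matrix.diagonal_mul, Matrix.mul_apply, Finset.mul_sum]
  apply Finset.sum_congr rfl
  intro j _
  rw [Matrix.diagonal_mul, Matrix.star_apply]
  have hro : ∀ x : ℝ, (RCLike.ofReal x : ℂ) = (x : ℂ) := fun x => rfl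
  have hc : W i j * (starRingEnd ℂ) (W i j) = ((‖W i j‖ ^ 2 : ℝ) : ℂ) := by
    rw [Complex.mul_conj']
    push_cast
    ring
  calc (RCLike.ofReal (Function.comp f hA.eigenvalues i) : ℂ) *
        (W i j * ((RCLike.ofReal (Function.comp g hB.eigenvalues j) : ℂ) * star (W i j)))
      = ((f (hA.eigenvalues i) : ℝ) : ℂ) * ((g (hB.eigenvalues j) : ℝ) : ℂ) *
          (W i j * (starRingEnd ℂ) (W i j)) := by
        simp only [Function.comp_apply, hro]; rw [Complex.star_def]; ring
    _ = _ := by rw [hc]; push_cast; ring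

lemma unitary_row_sum {W : Matrix n n ℂ} (hW : W * star W = 1) (i : n) :
    ∑ j, ‖W i j‖ ^ 2 = 1 := by
  have h1 : (W * star W) i i = 1 := by rw [hW, Matrix.one_apply_eq]
  rw [Matrix.mul_apply] at h1
  have h2 : ∑ j, ((‖W i j‖ ^ 2 : ℝ) : ℂ) = 1 := by
    rw [← h1]
    apply Finset.sum_congr rfl
    intro j _
    rw [Matrix.star_apply, Complex.star_def, Complex.mul_conj']
    norm_cast
  norm_cast at h2

lemma mexp_eq_cfc_s15 {A : Matrix n n ℂ} (hA : A.IsHermitian) : mexp A = cfc Real.exp A := by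
  set U := (hA.eigenvectorUnitary : Matrix n n ℂ) with hU
  have hsU : star U * U = 1 := Unitary.star_mul_self_of_mem (SetLike.coe_mem _)
  have hinv : U⁻¹ = star U := Matrix.inv_eq_left_inv hsU
  have hUnit : IsUnit U := (Matrix.isUnit_iff_isUnit_det U).mpr (Matrix.isUnit_det_of_left_inverse hsU)
  rw [hA.cfc_eq, Matrix.IsHermitian.cfc, Unitary.conjStarAlgAut_apply, ← hU]
  rw [mexp]
  conv_lhs => rw [hA.spectral_theorem, Unitary.conjStarAlgAut_apply, ← hU, ← hinv]
  rw [Matrix.exp_conj U (diagonal (RCLike.ofReal ∘ hA.eigenvalues)) hUnit,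
    Matrix.exp_diagonal, hinv]
  have hfun : NormedSpace.exp (RCLike.ofReal ∘ hA.eigenvalues : n → ℂ) =
      RCLike.ofReal ∘ Real.exp ∘ hA.eigenvalues := by
    funext k
    rw [Pi.coe_exp, ← Complex.exp_eq_exp_ℂ]
    simp only [Function.comp_apply]
    rw [show (RCLike.ofReal (hA.eigenvalues k) : ℂ) = ((hA.eigenvalues k : ℝ) : ℂ) from rfl,
      ← Complex.ofReal_exp]
    rfl
  rw [hfun]

lemma trace_ext {A B : Matrix n n ℂ} (h : ∀ Y, (A * Y).trace = (B * Y).trace) : A = B := by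
  ext i j
  have h1 := h (Matrix.single j i 1)
  have key : ∀ M : Matrix n n ℂ, (M * Matrix.single j i 1).trace = M i j := by
    intro M
    simp [Matrix.trace, Matrix.diag, Matrix.mul_apply, Matrix.single, ite_and,
      Finset.sum_ite_eq]
  rw [key, key] at h1
  exact h1

lemma key_ineq {ι κ : Type*} [Fintype ι] [Fintype κ] (p : ι → ℝ) (h : κ → ℝ) (c : ι → κ → ℝ)
    (hp : ∀ i, 0 < p i) (hc : ∀ i j, 0 ≤ c i j) (hrow : ∀ i, ∑ j, c i j = 1)
    (hsum : ∑ i, p i = 1) :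
    (∑ i, p i * Real.log (p i)) - ∑ i, ∑ j, p i * h j * c i j ≥
      -2 * Real.log (∑ i, ∑ j, Real.sqrt (p i) * Real.sqrt (Real.exp (h j)) * c i j) := by
  set w : ι × κ → ℝ := fun q => c q.1 q.2 * p q.1 with hw
  set x : ι × κ → ℝ := fun q => Real.sqrt (Real.exp (h q.2)) / Real.sqrt (p q.1) with hx
  have hw0 : ∀ q ∈ Finset.univ (α := ι × κ), 0 ≤ w q := fun q _ =>
    mul_nonneg (hc q.1 q.2) (hp q.1).le
  have hw1 : ∑ q : ι × κ, w q = 1 := by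
    rw [Fintype.sum_prod_type]
    calc ∑ i, ∑ j, c i j * p i = ∑ i, p i * ∑ j, c i j := by
          simp_rw [Finset.mul_sum]; exact Finset.sum_congr rfl fun i _ =>
            Finset.sum_congr rfl fun j _ => mul_comm _ _
      _ = 1 := by simp_rw [hrow]; simpa using hsum
  have hx0 : ∀ q ∈ Finset.univ (α := ι × κ), x q ∈ Set.Ioi (0:ℝ) := fun q _ =>
    div_pos (Real.sqrt_pos.2 (Real.exp_pos _)) (Real.sqrt_pos.2 (hp q.1))
  have jensen := (strictConcaveOn_log_Ioi.concaveOn).le_map_sum hw0 hw1 hx0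
  have hwx : ∑ q : ι × κ, w q • x q =
      ∑ i, ∑ j, Real.sqrt (p i) * Real.sqrt (Real.exp (h j)) * c i j := by
    rw [Fintype.sum_prod_type]
    apply Finset.sum_congr rfl; intro i _
    apply Finset.sum_congr rfl; intro j _
    rw [smul_eq_mul, hw, hx]
    have hpi := hp i
    field_simp
    rw [Real.sq_sqrt hpi.le]
  have hwlog : ∑ q : ι × κ, w q • Real.log (x q) =
      ∑ q : ι × κ, w q * (h q.2 / 2 - Real.log (p q.1) / 2) := by
    apply Finset.sum_congr rfl; intro q _
    rw [smul_eq_mul, hx]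
    congr 1
    rw [Real.log_div (Real.sqrt_pos.2 (Real.exp_pos _)).ne' (Real.sqrt_pos.2 (hp q.1)).ne',
      Real.log_sqrt (Real.exp_pos _).le, Real.log_sqrt (hp q.1).le, Real.log_exp]
  have hLHS : (∑ i, p i * Real.log (p i)) - (∑ i, ∑ j, p i * h j * c i j) =
      -2 * ∑ q : ι × κ, w q * (h q.2 / 2 - Real.log (p q.1) / 2) := by
    rw [Fintype.sum_prod_type]
    have h1 : ∑ i, p i * Real.log (p i) = ∑ i, ∑ j, c i j * p i * Real.log (p i) := by
      apply Finset.sum_congr rfl; intro i _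
      rw [← Finset.sum_mul, ← Finset.sum_mul, hrow, one_mul]
    rw [h1, ← Finset.sum_sub_distrib, Finset.mul_sum]
    apply Finset.sum_congr rfl; intro i _
    rw [← Finset.sum_sub_distrib, Finset.mul_sum]
    apply Finset.sum_congr rfl; intro j _
    ring
  rw [hLHS, ge_iff_le, neg_mul, neg_mul, neg_le_neg_iff]
  have := hwlog ▸ hwx ▸ jensen
  linarith [this]

end Helpers

theorem relEnt_diff_lower_bound {n ι : Type*} [Fintype n] [DecidableEq n] [Fintype ι]
    (ρ σ : Matrix n n ℂ) (hρ : ρ.PosDef) (hσ : σ.PosDef)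
    (hρ1 : ρ.trace = 1) (hσ1 : σ.trace = 1)
    (K : ι → Matrix n n ℂ) (hK : ∑ i, (K i)ᴴ * K i = 1)
    (Φ : Matrix n n ℂ → Matrix n n ℂ) (hΦ : ∀ X, Φ X = ∑ i, K i * X * (K i)ᴴ)
    (Φs : Matrix n n ℂ → Matrix n n ℂ)
    (hΦs : ∀ X Y, (Φs X * Y).trace = (X * Φ Y).trace)
    (hΦρ : (Φ ρ).PosDef) (hΦσ : (Φ σ).PosDef) :
    relEnt ρ σ - relEnt (Φ ρ) (Φ σ) ≥
      -2 * Real.log ((msqrt ρ *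
        msqrt (mexp (matLog σ + Φs (matLog (Φ ρ)) - Φs (matLog (Φ σ))))).trace.re) := by
  have hρh : ρ.IsHermitian := hρ.1
  have hρsa : IsSelfAdjoint ρ := hρh
  -- Φs is given by the Kraus adjoint form
  have hΦs' : ∀ X, Φs X = ∑ i, (K i)ᴴ * X * K i := by
    intro X
    apply trace_ext
    intro Y
    rw [hΦs X Y, hΦ Y, Matrix.mul_sum, Matrix.trace_sum, Finset.sum_mul, Matrix.trace_sum]
    apply Finset.sum_congr rfl; intro i _
    rw [show (K i)ᴴ * X * K i * Y = (K i)ᴴ * (X * (K i * Y)) from by simp only [Matrix.mul_assoc],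
      Matrix.trace_mul_comm ((K i)ᴴ) (X * (K i * Y)),
      show X * (K i * Y) * (K i)ᴴ = X * (K i * Y * (K i)ᴴ) from by simp only [Matrix.mul_assoc]]
  -- H and its hermitian-ness
  set H : Matrix n n ℂ := matLog σ + Φs (matLog (Φ ρ)) - Φs (matLog (Φ σ)) with hHdef
  have hΦsherm : ∀ X : Matrix n n ℂ, X.IsHermitian → (Φs X).IsHermitian := by
    intro X hX
    rw [hΦs' X]
    show (∑ i, (K i)ᴴ * X * K i)ᴴ = _
    rw [Matrix.conjTranspose_sum]
    apply Finset.sum_congr rfl; intro i _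
    rw [Matrix.conjTranspose_mul, Matrix.conjTranspose_mul, Matrix.conjTranspose_conjTranspose,
      hX.eq, Matrix.mul_assoc]
  have hlogσ : (matLog σ).IsHermitian := (cfc_predicate Real.log σ : IsSelfAdjoint _)
  have hlogΦρ : (matLog (Φ ρ)).IsHermitian := (cfc_predicate Real.log (Φ ρ) : IsSelfAdjoint _)
  have hlogΦσ : (matLog (Φ σ)).IsHermitian := (cfc_predicate Real.log (Φ σ) : IsSelfAdjoint _)
  have hHherm : H.IsHermitian :=
    (hlogσ.add (hΦsherm _ hlogΦρ)).sub (hΦsherm _ hlogΦσ)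
  have hHsa : IsSelfAdjoint H := hHherm
  -- the trace identity
  have htr : ∀ X, (ρ * Φs X).trace = ((Φ ρ) * X).trace := by
    intro X
    rw [Matrix.trace_mul_comm, hΦs, Matrix.trace_mul_comm]
  have hkey : (ρ * (matLog ρ - matLog σ)).trace
      - ((Φ ρ) * (matLog (Φ ρ) - matLog (Φ σ))).trace
      = (ρ * matLog ρ).trace - (ρ * H).trace := by
    rw [hHdef]
    simp only [Matrix.mul_sub, Matrix.mul_add, Matrix.trace_sub, Matrix.trace_add, htr]
    ring
  -- eigen-data
  set p : n → ℝ := hρh.eigenvalues with hpdef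
  set hh : n → ℝ := hHherm.eigenvalues with hhdef
  set W : Matrix n n ℂ := star (hρh.eigenvectorUnitary : Matrix n n ℂ) *
    (hHherm.eigenvectorUnitary : Matrix n n ℂ) with hWdef
  set c : n → n → ℝ := fun i j => ‖W i j‖ ^ 2 with hcdef
  have hp : ∀ i, 0 < p i := fun i => hρ.eigenvalues_pos i
  have hc : ∀ i j, 0 ≤ c i j := fun i j => by positivity
  have hWW : W * star W = 1 := by
    have h1 : (hHherm.eigenvectorUnitary : Matrix n n ℂ) *
        star (hHherm.eigenvectorUnitary : Matrix n n ℂ) = 1 :=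
      Unitary.mul_star_self_of_mem (SetLike.coe_mem _)
    have h2 : star (hρh.eigenvectorUnitary : Matrix n n ℂ) *
        (hρh.eigenvectorUnitary : Matrix n n ℂ) = 1 :=
      Unitary.star_mul_self_of_mem (SetLike.coe_mem _)
    rw [hWdef, StarMul.star_mul, star_star]
    rw [show star (hρh.eigenvectorUnitary : Matrix n n ℂ) *
        (hHherm.eigenvectorUnitary : Matrix n n ℂ) *
        (star (hHherm.eigenvectorUnitary : Matrix n n ℂ) *
          (hρh.eigenvectorUnitary : Matrix n n ℂ))
        = star (hρh.eigenvectorUnitary : Matrix n n ℂ) *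
          (((hHherm.eigenvectorUnitary : Matrix n n ℂ) *
            star (hHherm.eigenvectorUnitary : Matrix n n ℂ)) *
            (hρh.eigenvectorUnitary : Matrix n n ℂ)) from by simp only [Matrix.mul_assoc],
      h1, one_mul, h2]
  have hrow : ∀ i, ∑ j, c i j = 1 := fun i => unitary_row_sum hWW i
  -- trace computations
  have e1 : (ρ * matLog ρ).trace = ((∑ i, p i * Real.log (p i) : ℝ) : ℂ) := by
    have h0 : ρ * matLog ρ = cfc (fun x : ℝ => x * Real.log x) ρ := by
      rw [cfc_mul (fun x : ℝ => x) Real.log ρ (matContOn ρ _) (matContOn ρ _),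
        cfc_id' ℝ ρ hρsa]
      rfl
    rw [h0, trace_cfc' hρh]
    push_cast
    rfl
  have e2 : (ρ * H).trace = ((∑ i, ∑ j, p i * hh j * c i j : ℝ) : ℂ) := by
    have h0 := trace_cfc_mul_cfc hρh hHherm (fun x : ℝ => x) (fun x : ℝ => x)
    rw [cfc_id' ℝ ρ hρsa, cfc_id' ℝ H hHsa] at h0
    rw [h0]
    simp only [hcdef, hpdef, hhdef, hWdef]
    norm_cast
  have e3 : (msqrt ρ * msqrt (mexp H)).trace =
      ((∑ i, ∑ j, Real.sqrt (p i) * Real.sqrt (Real.exp (hh j)) * c i j : ℝ) : ℂ) := by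
    have hsq : msqrt (mexp H) = cfc (Real.sqrt ∘ Real.exp) H := by
      rw [show msqrt (mexp H) = cfc Real.sqrt (mexp H) from rfl, mexp_eq_cfc_s15 hHherm,
        ← cfc_comp Real.sqrt Real.exp H hHsa
          (contOn_finite ((Matrix.finite_real_spectrum (A := H)).image _) _) (matContOn H _)]
    rw [show msqrt ρ = cfc Real.sqrt ρ from rfl, hsq, trace_cfc_mul_cfc hρh hHherm]
    simp only [hcdef, hpdef, hhdef, hWdef, Function.comp_apply]
    norm_cast
  have hsum : ∑ i, p i = 1 := by
    have h0 : ρ.trace = ((∑ i, p i : ℝ) : ℂ) := by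
      conv_lhs => rw [← cfc_id' ℝ ρ hρsa]
      rw [trace_cfc' hρh]
      push_cast
      rfl
    rw [hρ1] at h0
    exact_mod_cast h0.symm
  -- final assembly
  have hL : relEnt ρ σ - relEnt (Φ ρ) (Φ σ) =
      (∑ i, p i * Real.log (p i)) - (∑ i, ∑ j, p i * hh j * c i j) := by
    show (ρ * (matLog ρ - matLog σ)).trace.re
      - ((Φ ρ) * (matLog (Φ ρ) - matLog (Φ σ))).trace.re = _
    rw [← Complex.sub_re, hkey, e1, e2, ← Complex.ofReal_sub, Complex.ofReal_re]
  rw [hL, e3, Complex.ofReal_re]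
  exact key_ineq p hh c hp hc hrow hsum
end

section
/- For non-singular density matrices ρ, σ on a finite-dimensional Hilbert space, the fidelity satisfies F(ρ,σ) ≥ Tr(√ρ)·exp(−(1/2)S(ρ) − (1/2)H(λ↓(ρ)‖λ↑(σ))), where λ↓(ρ) is the eigenvalue vector of ρ in decreasing order, λ↑(σ) that of σ in increasing order, S is von Neumann entropy, and H(p‖q) = Σ_j p_j log(p_j/q_j) is classical relative entropy. -/
open Matrix
open scoped ComplexOrder

/-- fidelity F(ρ,σ) = ‖√ρ √σ‖₁ -/
noncomputable def fidelity {n : Type*} [Fintype n] [DecidableEq n]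
    (ρ σ : Matrix n n ℂ) : ℝ :=
  traceNorm (msqrt ρ * msqrt σ)

section
variable {n : Type*} [Fintype n] [DecidableEq n] {A : Matrix n n ℂ} (hA : A.IsHermitian)

lemma sUU : (star (hA.eigenvectorUnitary : Matrix n n ℂ)) * (hA.eigenvectorUnitary : Matrix n n ℂ) = 1 :=
  Unitary.star_mul_self_of_mem (SetLike.coe_mem _)

lemma UsU : (hA.eigenvectorUnitary : Matrix n n ℂ) * (star (hA.eigenvectorUnitary : Matrix n n ℂ)) = 1 :=
  Unitary.mul_star_self_of_mem (SetLike.coe_mem _)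

lemma cfc_mul' (f g : ℝ → ℝ) : hA.cfc f * hA.cfc g = hA.cfc (fun x => f x * g x) := by
  unfold Matrix.IsHermitian.cfc
  simp only [Unitary.conjStarAlgAut_apply, Unitary.coe_star]
  rw [mul_assoc, mul_assoc, ← mul_assoc (star _) _, ← mul_assoc (star _),
    sUU hA, one_mul, ← mul_assoc, ← mul_assoc,
    mul_assoc _ _ (diagonal _), diagonal_mul_diagonal]
  congr 1
  ext i
  simp

lemma cfc_trace' (f : ℝ → ℝ) : (hA.cfc f).trace = ∑ i, (f (hA.eigenvalues i) : ℂ) := by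
  unfold Matrix.IsHermitian.cfc
  simp only [Unitary.conjStarAlgAut_apply, Unitary.coe_star]
  rw [trace_mul_cycle, sUU hA, one_mul, trace_diagonal]
  simp

lemma cfc_congr' {f g : ℝ → ℝ} (h : ∀ i, f (hA.eigenvalues i) = g (hA.eigenvalues i)) :
    hA.cfc f = hA.cfc g := by
  unfold Matrix.IsHermitian.cfc
  have : (RCLike.ofReal ∘ f ∘ hA.eigenvalues : n → ℂ) = RCLike.ofReal ∘ g ∘ hA.eigenvalues := by
    funext i; simp [h i]
  rw [this]

lemma mcfc_id : hA.cfc (fun x => x) = A := by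
  unfold Matrix.IsHermitian.cfc
  exact hA.spectral_theorem.symm

lemma cfc_one' : hA.cfc (fun _ => 1) = 1 := by
  unfold Matrix.IsHermitian.cfc
  simp only [Unitary.conjStarAlgAut_apply, Unitary.coe_star]
  have : diagonal (RCLike.ofReal ∘ (fun _ : ℝ => (1:ℝ)) ∘ hA.eigenvalues) = (1 : Matrix n n ℂ) := by
    simp [Function.comp_def]
  rw [this, mul_one, UsU hA]

lemma cfc_herm (f : ℝ → ℝ) : (hA.cfc f).IsHermitian := by
  unfold Matrix.IsHermitian.cfc
  simp only [Unitary.conjStarAlgAut_apply, Unitary.coe_star]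
  unfold Matrix.IsHermitian
  rw [conjTranspose_mul, conjTranspose_mul, diagonal_conjTranspose, mul_assoc]
  congr 1
  · simp [star_eq_conjTranspose]
  congr 1
  ext i j; simp [diagonal, Pi.star_def]

end

section
variable {n : Type*} [Fintype n] [DecidableEq n]

lemma posDef_of_posSemidef_isUnit {M : Matrix n n ℂ} (h : M.PosSemidef) (hu : IsUnit M.det) :
    M.PosDef := by
  refine ⟨h.1, fun x hx => lt_of_le_of_ne (h.2 x) fun hc => hx ?_⟩
  have h0 : M *ᵥ x = 0 := (h.dotProduct_mulVec_zero_iff x).mp (by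
    rw [hc]; simp [dotProduct, mulVec, Finsupp.sum_fintype, Finset.mul_sum, mul_assoc, Pi.star_apply])
  have := Matrix.mulVec_injective_iff_isUnit.mpr ((Matrix.isUnit_iff_isUnit_det M).mpr hu)
    (by simp [h0] : M *ᵥ x = M *ᵥ 0)
  simpa using this

lemma diag_entry_norm_le_one {W : Matrix n n ℂ} (hW : star W * W = 1) (i : n) : ‖W i i‖ ≤ 1 := by
  have h1 : ∑ k, Complex.normSq (W k i) = 1 := by
    have := congrArg (fun M : Matrix n n ℂ => (M i i).re) hW
    simpa [Matrix.mul_apply, Matrix.one_apply, Complex.normSq_apply, Complex.mul_re,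
      Pi.star_apply, mul_comm] using this
  have h2 : Complex.normSq (W i i) ≤ 1 := by
    rw [← h1]
    exact Finset.single_le_sum (f := fun k => Complex.normSq (W k i))
      (fun k _ => Complex.normSq_nonneg _) (Finset.mem_univ i)
  have h3 : ‖W i i‖ ^ 2 ≤ 1 := by
    rw [← Complex.normSq_eq_norm_sq]; exact h2
  nlinarith [norm_nonneg (W i i)]

/-- key: |Tr X| ≥ Re Tr X bounded by trace norm, for invertible X -/
lemma re_trace_le_traceNorm {X : Matrix n n ℂ} (hX : IsUnit X.det) :
    X.trace.re ≤ traceNorm X := by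
  set M := Xᴴ * X with hMdef
  have hMps : M.PosSemidef := posSemidef_conjTranspose_mul_self X
  have hMu : IsUnit M.det := by
    rw [hMdef, det_mul, det_conjTranspose]
    exact (hX.star).mul hX
  have hMpd : M.PosDef := posDef_of_posSemidef_isUnit hMps hMu
  have hM := hMps.1
  have hμpos : ∀ i, 0 < hM.eigenvalues i := hMpd.eigenvalues_pos
  set P := hM.cfc Real.sqrt with hP
  set Q := hM.cfc (fun x => (Real.sqrt x)⁻¹) with hQ
  have hQP : Q * P = 1 := by
    rw [hQ, hP, cfc_mul' hM, ← cfc_one' hM]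
    exact cfc_congr' hM fun i => inv_mul_cancel₀ (ne_of_gt (Real.sqrt_pos.2 (hμpos i)))
  have hQherm : Qᴴ = Q := cfc_herm hM _
  set V := (hM.eigenvectorUnitary : Matrix n n ℂ) with hV
  set D : Matrix n n ℂ := diagonal (fun i => (Real.sqrt (hM.eigenvalues i) : ℂ)) with hD
  have hPdef : P = V * D * star V := rfl
  set U' := X * Q with hU'def
  have hU' : star U' * U' = 1 := by
    have hsQ : star Q = Q := by rw [star_eq_conjTranspose, hQherm]
    have hQMQ : Q * M * Q = 1 := by
      conv_lhs => rw [← mcfc_id hM]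
      rw [hQ, cfc_mul' hM, cfc_mul' hM, ← cfc_one' hM]
      refine cfc_congr' hM fun i => ?_
      have h0 : Real.sqrt (hM.eigenvalues i) ≠ 0 := ne_of_gt (Real.sqrt_pos.2 (hμpos i))
      rw [← Real.mul_self_sqrt (le_of_lt (hμpos i))]
      field_simp
      rw [Real.sqrt_sq (Real.sqrt_nonneg _)]
    calc star (X * Q) * (X * Q) = Q * (Xᴴ * X) * Q := by
          rw [Matrix.star_mul, hsQ, star_eq_conjTranspose]; noncomm_ring
      _ = 1 := hQMQ
  have hXQP : X = U' * P := by
    rw [hU'def, mul_assoc, hQP, mul_one]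
  set W := star V * U' * V with hW
  have hWtr : X.trace = (W * D).trace := by
    rw [hXQP, hPdef]
    rw [show U' * (V * D * star V) = (U' * (V * D)) * star V by noncomm_ring,
      trace_mul_comm]
    congr 1
    rw [hW]
    noncomm_ring
  have hWu : star W * W = 1 := by
    have h1 : star W = star V * star U' * V := by
      rw [hW]; simp [Matrix.star_mul, star_star, mul_assoc]
    rw [h1, hW]
    calc star V * star U' * V * (star V * U' * V)
        = star V * star U' * (V * star V) * U' * V := by noncomm_ring
      _ = star V * (star U' * U') * V := by rw [UsU hM]; noncomm_ring
      _ = 1 := by rw [hU', mul_one, sUU hM]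
  have htrW : (W * D).trace = ∑ i, W i i * ((Real.sqrt (hM.eigenvalues i) : ℝ) : ℂ) := by
    simp [Matrix.trace, Matrix.diag, hD, mul_diagonal]
  have hTN : traceNorm X = ∑ i, Real.sqrt (hM.eigenvalues i) := by
    unfold traceNorm msqrt
    rw [hM.cfc_eq, cfc_trace' hM]
    rw [show (∑ i, ((Real.sqrt (hM.eigenvalues i) : ℝ) : ℂ)) =
      ((∑ i, Real.sqrt (hM.eigenvalues i) : ℝ) : ℂ) by push_cast; ring]
    exact Complex.ofReal_re _
  rw [hTN, hWtr, htrW]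
  rw [Complex.re_sum]
  refine Finset.sum_le_sum fun i _ => ?_
  have h1 : (W i i * ((Real.sqrt (hM.eigenvalues i) : ℝ) : ℂ)).re
      = (W i i).re * Real.sqrt (hM.eigenvalues i) := by
    simp [Complex.mul_re]
  rw [h1]
  have h2 : (W i i).re ≤ 1 := by
    refine le_trans (Complex.re_le_norm _) ?_
    exact diag_entry_norm_le_one hWu i
  nlinarith [Real.sqrt_nonneg (hM.eigenvalues i)]
end


section
variable {n : Type*} [Fintype n] [DecidableEq n]

lemma normSq_mem_doublyStochastic {W : Matrix n n ℂ} (h1 : star W * W = 1)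
    (h2 : W * star W = 1) :
    Matrix.of (fun i j => Complex.normSq (W i j)) ∈ doublyStochastic ℝ n := by
  rw [mem_doublyStochastic_iff_sum]
  refine ⟨fun i j => Complex.normSq_nonneg _, fun i => ?_, fun j => ?_⟩
  · have := congrArg (fun M : Matrix n n ℂ => (M i i).re) h2
    simpa [Matrix.mul_apply, Matrix.one_apply, Complex.normSq_apply, Complex.mul_re,
      Pi.star_apply, mul_comm] using this
  · have := congrArg (fun M : Matrix n n ℂ => (M j j).re) h1
    simpa [Matrix.mul_apply, Matrix.one_apply, Complex.normSq_apply, Complex.mul_re,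
      Pi.star_apply, mul_comm] using this

lemma sum_sum_doublyStochastic_ge {a b : n → ℝ} {D : Matrix n n ℝ}
    (hD : D ∈ doublyStochastic ℝ n) {K : ℝ}
    (h : ∀ π : Equiv.Perm n, K ≤ ∑ i, a i * b (π i)) :
    K ≤ ∑ i, ∑ j, a i * b j * D i j := by
  obtain ⟨w, hw0, hw1, hwsum⟩ := exists_eq_sum_perm_of_mem_doublyStochastic hD
  have hDij : ∀ i j, D i j = ∑ π : Equiv.Perm n, w π * (π.permMatrix ℝ) i j := by
    intro i j
    rw [← hwsum]
    simp [Matrix.sum_apply]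
  have key : ∀ π : Equiv.Perm n,
      ∑ i, a i * b (π i) = ∑ i, ∑ j, a i * b j * (π.permMatrix ℝ) i j := by
    intro π
    refine Finset.sum_congr rfl fun i _ => ?_
    simp [Equiv.Perm.permMatrix, PEquiv.toMatrix_apply, Equiv.toPEquiv_apply, mul_ite,
      Finset.sum_ite_eq]
  calc K = ∑ π : Equiv.Perm n, w π * K := by rw [← Finset.sum_mul, hw1, one_mul]
    _ ≤ ∑ π : Equiv.Perm n, w π * ∑ i, a i * b (π i) := by
        refine Finset.sum_le_sum fun π _ => mul_le_mul_of_nonneg_left (h π) (hw0 π)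
    _ = ∑ i, ∑ j, a i * b j * D i j := by
        simp_rw [key, Finset.mul_sum]
        rw [Finset.sum_comm]
        refine Finset.sum_congr rfl fun i _ => ?_
        rw [Finset.sum_comm]
        refine Finset.sum_congr rfl fun j _ => ?_
        rw [hDij, Finset.mul_sum]
        exact Finset.sum_congr rfl fun π _ => by ring

end


section
variable {n : Type*} [Fintype n] [DecidableEq n] {A B : Matrix n n ℂ}
  (hA : A.IsHermitian) (hB : B.IsHermitian)

lemma trace_cfc_mul_cfc_re (f g : ℝ → ℝ) :
    (hA.cfc f * hB.cfc g).trace.re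
      = ∑ i, ∑ j, f (hA.eigenvalues i) * g (hB.eigenvalues j) *
          Complex.normSq ((star (hA.eigenvectorUnitary : Matrix n n ℂ)
            * (hB.eigenvectorUnitary : Matrix n n ℂ)) i j) := by
  set UA := (hA.eigenvectorUnitary : Matrix n n ℂ) with hUA
  set UB := (hB.eigenvectorUnitary : Matrix n n ℂ) with hUB
  set W := star UA * UB with hW
  set Df : Matrix n n ℂ := diagonal (fun i => (f (hA.eigenvalues i) : ℂ)) with hDf
  set Dg : Matrix n n ℂ := diagonal (fun j => (g (hB.eigenvalues j) : ℂ)) with hDg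
  have hUAu : UA * star UA = 1 := Unitary.mul_star_self_of_mem (SetLike.coe_mem _)
  have hUAu' : star UA * UA = 1 := Unitary.star_mul_self_of_mem (SetLike.coe_mem _)
  have hfac : hA.cfc f * hB.cfc g = UA * (Df * W * Dg * star W) * star UA := by
    show UA * Df * star UA * (UB * Dg * star UB) = _
    have h1 : UB = UA * W := by rw [hW, ← mul_assoc, hUAu, one_mul]
    rw [h1, Matrix.star_mul]
    calc UA * Df * star UA * (UA * W * Dg * (star W * star UA))
        = UA * Df * (star UA * UA) * (W * Dg * (star W * star UA)) := by noncomm_ring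
      _ = UA * (Df * W * Dg * star W) * star UA := by rw [hUAu']; noncomm_ring
  have htr : (hA.cfc f * hB.cfc g).trace = (Df * W * Dg * star W).trace := by
    rw [hfac, trace_mul_cycle, ← mul_assoc, hUAu', one_mul]
  rw [htr]
  have hent : (Df * W * Dg * star W).trace
      = ∑ i, ∑ j, ((f (hA.eigenvalues i) * g (hB.eigenvalues j)
          * Complex.normSq (W i j) : ℝ) : ℂ) := by
    rw [show Df * W * Dg * star W = (Df * W) * (Dg * star W) by noncomm_ring]
    rw [Matrix.trace]
    refine Finset.sum_congr rfl fun i _ => ?_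
    rw [Matrix.diag, Matrix.mul_apply]
    refine Finset.sum_congr rfl fun j _ => ?_
    rw [hDf, hDg, diagonal_mul, diagonal_mul, Matrix.star_apply]
    rw [show (f (hA.eigenvalues i) : ℂ) * W i j * ((g (hB.eigenvalues j) : ℂ) * star (W i j))
        = (f (hA.eigenvalues i) : ℂ) * (g (hB.eigenvalues j) : ℂ) * (W i j * star (W i j))
      from by ring]
    rw [Complex.star_def, Complex.mul_conj]
    push_cast
    ring
  rw [hent]
  norm_cast
end


lemma cheby_sign {d : ℕ} (t f : Fin d → ℝ) (hf : Monotone f)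
    (hsum : ∑ i, t i = 0)
    (hsign : ∀ i j, t i < 0 → 0 < t j → f i ≤ f j) :
    0 ≤ ∑ i, t i * f i := by
  classical
  set N := Finset.univ.filter (fun i => t i < 0) with hN
  rcases N.eq_empty_or_nonempty with hNe | hNe
  · have hall : ∀ i ∈ Finset.univ, 0 ≤ t i := by
      intro i _
      by_contra h
      exact absurd (hN ▸ Finset.mem_filter.mpr ⟨Finset.mem_univ i, lt_of_not_ge h⟩)
        (hNe ▸ Finset.notMem_empty i)
    have : ∀ i ∈ Finset.univ, t i = 0 :=
      (Finset.sum_eq_zero_iff_of_nonneg hall).mp hsum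
    refine le_of_eq (Finset.sum_eq_zero fun i _ => by rw [this i (Finset.mem_univ i), zero_mul]).symm
  · set c := (N.image f).max' (hNe.image f) with hcdef
    have hc : c ∈ N.image f := (N.image f).max'_mem (hNe.image f)
    obtain ⟨i0, hi0N, hi0⟩ := Finset.mem_image.mp hc
    have hcmax : ∀ i ∈ N, f i ≤ c := fun i hi =>
      (N.image f).le_max' (f i) (Finset.mem_image_of_mem f hi)
    have hterm : ∀ i, 0 ≤ t i * (f i - c) := by
      intro i
      rcases lt_trichotomy (t i) 0 with h | h | h
      · have : f i ≤ c := hcmax i (hN ▸ Finset.mem_filter.mpr ⟨Finset.mem_univ i, h⟩)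
        nlinarith
      · rw [h, zero_mul]
      · have ht0 : t i0 < 0 := by have := Finset.mem_filter.mp (hN ▸ hi0N); exact this.2
        have : c ≤ f i := hi0 ▸ hsign i0 i ht0 h
        nlinarith
    calc (0:ℝ) ≤ ∑ i, t i * (f i - c) := Finset.sum_nonneg fun i _ => hterm i
      _ = ∑ i, t i * f i - c * ∑ i, t i := by rw [Finset.mul_sum, ← Finset.sum_sub_distrib]; congr 1; ext i; ring
      _ = ∑ i, t i * f i := by rw [hsum, mul_zero, sub_zero]

lemma scalar_bound {d : ℕ} (p q : Fin d → ℝ) (hp0 : ∀ i, 0 < p i) (hq0 : ∀ i, 0 < q i)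
    (hp1 : ∑ i, p i = 1) (hpa : Antitone p) (hqm : Monotone q) :
    (∑ i, Real.sqrt (p i)) * Real.exp ((1/2) * ∑ i, p i * Real.log (q i))
      ≤ ∑ i, Real.sqrt (p i) * Real.sqrt (q i) := by
  have hne : (Finset.univ : Finset (Fin d)).Nonempty := by
    rcases (Finset.univ : Finset (Fin d)).eq_empty_or_nonempty with h | h
    · rw [h, Finset.sum_empty] at hp1; norm_num at hp1
    · exact h
  set S := ∑ i, Real.sqrt (p i) with hS
  have hS0 : 0 < S := Finset.sum_pos (fun i _ => Real.sqrt_pos.2 (hp0 i)) hne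
  set w := fun i => Real.sqrt (p i) / S with hw
  have hw0 : ∀ i, 0 ≤ w i := fun i => div_nonneg (Real.sqrt_nonneg _) (le_of_lt hS0)
  have hw1 : ∑ i, w i = 1 := by
    rw [hw]; simp only; rw [← Finset.sum_div, ← hS, div_self (ne_of_gt hS0)]
  have hjen : Real.exp (∑ i, w i * Real.log (Real.sqrt (q i))) ≤ ∑ i, w i * Real.sqrt (q i) := by
    have h := Real.geom_mean_le_arith_mean_weighted Finset.univ w (fun i => Real.sqrt (q i))
      (fun i _ => hw0 i) hw1 (fun i _ => Real.sqrt_nonneg _)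
    refine le_trans (le_of_eq ?_) h
    rw [Real.exp_sum]
    refine Finset.prod_congr rfl fun i _ => ?_
    rw [Real.rpow_def_of_pos (Real.sqrt_pos.2 (hq0 i)), mul_comm, Real.exp_eq_exp]
  have hkey : ∑ i, p i * Real.log (q i) ≤ ∑ i, w i * Real.log (q i) := by
    have h0 : 0 ≤ ∑ i, (w i - p i) * Real.log (q i) := by
      refine cheby_sign (fun i => w i - p i) (fun i => Real.log (q i))
        (fun i j hij => Real.log_le_log (hq0 i) (hqm hij)) ?_ ?_
      · rw [Finset.sum_sub_distrib, hw1, hp1, sub_self]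
      · intro i j hi hj
        simp only [sub_neg, sub_pos] at hi hj
        rw [hw] at hi hj
        simp only at hi hj
        have hsi := Real.sqrt_pos.2 (hp0 i)
        have hsj := Real.sqrt_pos.2 (hp0 j)
        have hi' := (div_lt_iff₀ hS0).mp hi
        have hj' := (lt_div_iff₀ hS0).mp hj
        have h1 : 1 < Real.sqrt (p i) * S := by
          nlinarith [Real.sq_sqrt (hp0 i).le]
        have h2 : Real.sqrt (p j) * S < 1 := by
          nlinarith [Real.sq_sqrt (hp0 j).le]
        have h4 : Real.sqrt (p j) < Real.sqrt (p i) :=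
          (mul_lt_mul_iff_left₀ hS0).mp (h2.trans h1)
        have h3 : p j < p i := by
          nlinarith [Real.sqrt_nonneg (p j), Real.sq_sqrt (hp0 i).le, Real.sq_sqrt (hp0 j).le]
        have hij : i ≤ j := by
          by_contra hc
          push_neg at hc
          exact absurd (hpa (le_of_lt hc)) (not_le.2 h3)
        exact Real.log_le_log (hq0 i) (hqm hij)
    have h1 : ∑ i, (w i - p i) * Real.log (q i)
        = ∑ i, w i * Real.log (q i) - ∑ i, p i * Real.log (q i) := by
      rw [← Finset.sum_sub_distrib]
      exact Finset.sum_congr rfl fun i _ => by ring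
    linarith
  calc S * Real.exp ((1/2) * ∑ i, p i * Real.log (q i))
      ≤ S * Real.exp ((1/2) * ∑ i, w i * Real.log (q i)) := by
        refine mul_le_mul_of_nonneg_left (Real.exp_le_exp.2 (by linarith)) hS0.le
    _ = S * Real.exp (∑ i, w i * Real.log (Real.sqrt (q i))) := by
        congr 1
        rw [Real.exp_eq_exp, Finset.mul_sum]
        refine Finset.sum_congr rfl fun i _ => ?_
        rw [Real.log_sqrt (hq0 i).le]
        ring
    _ ≤ S * ∑ i, w i * Real.sqrt (q i) := mul_le_mul_of_nonneg_left hjen hS0.le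
    _ = ∑ i, Real.sqrt (p i) * Real.sqrt (q i) := by
        rw [Finset.mul_sum]
        refine Finset.sum_congr rfl fun i _ => ?_
        rw [hw]
        field_simp


theorem fidelity_lower_bound {d : ℕ}
    (ρ σ : Matrix (Fin d) (Fin d) ℂ) (hρ : ρ.PosDef) (hσ : σ.PosDef)
    (hρ1 : ρ.trace = 1) (hσ1 : σ.trace = 1) :
    fidelity ρ σ ≥ (msqrt ρ).trace.re * Real.exp (-(1 / 2) * vnEnt ρ -
      (1 / 2) * ∑ j : Fin d,
        (hρ.1.eigenvalues (Tuple.sort hρ.1.eigenvalues j.rev)) *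
          Real.log ((hρ.1.eigenvalues (Tuple.sort hρ.1.eigenvalues j.rev)) /
            (hσ.1.eigenvalues (Tuple.sort hσ.1.eigenvalues j)))) := by
  have hρh := hρ.1
  have hσh := hσ.1
  set α := hρ.1.eigenvalues with hα
  set β := hσ.1.eigenvalues with hβ
  have hα0 : ∀ i, 0 < α i := hρ.eigenvalues_pos
  have hβ0 : ∀ i, 0 < β i := hσ.eigenvalues_pos
  set eα : Equiv.Perm (Fin d) := Fin.revPerm.trans (Tuple.sort α) with heα
  set eβ : Equiv.Perm (Fin d) := Tuple.sort β with heβ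
  set p : Fin d → ℝ := fun j => α (eα j) with hp
  set q : Fin d → ℝ := fun j => β (eβ j) with hq
  have hp0 : ∀ j, 0 < p j := fun j => hα0 _
  have hq0 : ∀ j, 0 < q j := fun j => hβ0 _
  -- eigenvalue sums
  have htrα : ρ.trace = ∑ i, (α i : ℂ) := by
    conv_lhs => rw [← mcfc_id hρ.1]
    rw [cfc_trace' hρ.1]
  have hsumα : ∑ i, α i = 1 := by
    have h := htrα.symm.trans hρ1
    exact_mod_cast h
  have hsump : ∑ j, p j = 1 := by
    rw [hp]; rw [Equiv.sum_comp eα (fun i => α i)]; exact hsumα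
  -- monotonicity
  have hpa : Antitone p := by
    intro i j hij
    exact Tuple.monotone_sort α (by simpa using Fin.rev_le_rev.mpr hij)
  have hqm : Monotone q := fun i j hij => Tuple.monotone_sort β hij
  -- trace of msqrt ρ
  have hS : (msqrt ρ).trace.re = ∑ j, Real.sqrt (p j) := by
    unfold msqrt
    rw [hρ.1.cfc_eq, cfc_trace' hρ.1]
    rw [show (∑ i, ((Real.sqrt (α i) : ℝ) : ℂ)) = ((∑ i, Real.sqrt (α i) : ℝ) : ℂ) by push_cast; ring]
    rw [Complex.ofReal_re]
    exact (Equiv.sum_comp eα (fun i => Real.sqrt (α i))).symm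
  -- von Neumann entropy
  have hvn : vnEnt ρ = - ∑ j, p j * Real.log (p j) := by
    unfold vnEnt matLog
    rw [hρ.1.cfc_eq]
    conv_lhs => rw [show ρ * hρ.1.cfc Real.log = hρ.1.cfc (fun x => x) * hρ.1.cfc Real.log by
      rw [mcfc_id hρ.1]]
    rw [cfc_mul' hρ.1, cfc_trace' hρ.1]
    rw [show (∑ i, (((fun x => x * Real.log x) (α i) : ℝ) : ℂ))
      = ((∑ i, α i * Real.log (α i) : ℝ) : ℂ) by push_cast; ring]
    rw [Complex.ofReal_re]
    congr 1
    exact (Equiv.sum_comp eα (fun i => α i * Real.log (α i))).symm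
  -- the matrix X and its invertibility
  set X := msqrt ρ * msqrt σ with hX
  have hXeq : X = hρ.1.cfc Real.sqrt * hσ.1.cfc Real.sqrt := by
    rw [hX]; unfold msqrt; rw [hρ.1.cfc_eq, hσ.1.cfc_eq]
  have hsqρ : hρ.1.cfc Real.sqrt * hρ.1.cfc Real.sqrt = ρ := by
    rw [cfc_mul' hρ.1]
    conv_rhs => rw [← mcfc_id hρ.1]
    exact cfc_congr' hρ.1 fun i => Real.mul_self_sqrt (hα0 i).le
  have hsqσ : hσ.1.cfc Real.sqrt * hσ.1.cfc Real.sqrt = σ := by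
    rw [cfc_mul' hσ.1]
    conv_rhs => rw [← mcfc_id hσ.1]
    exact cfc_congr' hσ.1 fun i => Real.mul_self_sqrt (hβ0 i).le
  have hdρ : (hρ.1.cfc Real.sqrt).det ≠ 0 := by
    intro h
    have := congrArg Matrix.det hsqρ
    rw [det_mul, h, mul_zero] at this
    exact (ne_of_gt hρ.det_pos) this.symm
  have hdσ : (hσ.1.cfc Real.sqrt).det ≠ 0 := by
    intro h
    have := congrArg Matrix.det hsqσ
    rw [det_mul, h, mul_zero] at this
    exact (ne_of_gt hσ.det_pos) this.symm
  have hXdet : IsUnit X.det := by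
    rw [hXeq, det_mul]
    exact (isUnit_iff_ne_zero.mpr (mul_ne_zero hdρ hdσ))
  -- step 1 : trace norm bound
  have step1 : X.trace.re ≤ traceNorm X := re_trace_le_traceNorm hXdet
  -- step 2 : trace as double sum
  set W := star (hρ.1.eigenvectorUnitary : Matrix (Fin d) (Fin d) ℂ)
    * (hσ.1.eigenvectorUnitary : Matrix (Fin d) (Fin d) ℂ) with hW
  have step2 : X.trace.re = ∑ i, ∑ j, Real.sqrt (α i) * Real.sqrt (β j)
      * Complex.normSq (W i j) := by
    rw [hXeq]
    exact trace_cfc_mul_cfc_re hρ.1 hσ.1 Real.sqrt Real.sqrt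
  -- doubly stochastic
  have hWu1 : star W * W = 1 := by
    rw [hW, Matrix.star_mul, star_star]
    calc star (hσ.1.eigenvectorUnitary : Matrix (Fin d) (Fin d) ℂ)
          * (hρ.1.eigenvectorUnitary : Matrix (Fin d) (Fin d) ℂ)
          * (star (hρ.1.eigenvectorUnitary : Matrix (Fin d) (Fin d) ℂ)
          * (hσ.1.eigenvectorUnitary : Matrix (Fin d) (Fin d) ℂ))
        = star (hσ.1.eigenvectorUnitary : Matrix (Fin d) (Fin d) ℂ)
          * ((hρ.1.eigenvectorUnitary : Matrix (Fin d) (Fin d) ℂ)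
          * star (hρ.1.eigenvectorUnitary : Matrix (Fin d) (Fin d) ℂ))
          * (hσ.1.eigenvectorUnitary : Matrix (Fin d) (Fin d) ℂ) := by noncomm_ring
      _ = 1 := by rw [UsU hρ.1, mul_one, sUU hσ.1]
  have hWu2 : W * star W = 1 := by
    rw [hW, Matrix.star_mul, star_star]
    calc star (hρ.1.eigenvectorUnitary : Matrix (Fin d) (Fin d) ℂ)
          * (hσ.1.eigenvectorUnitary : Matrix (Fin d) (Fin d) ℂ)
          * (star (hσ.1.eigenvectorUnitary : Matrix (Fin d) (Fin d) ℂ)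
          * (hρ.1.eigenvectorUnitary : Matrix (Fin d) (Fin d) ℂ))
        = star (hρ.1.eigenvectorUnitary : Matrix (Fin d) (Fin d) ℂ)
          * ((hσ.1.eigenvectorUnitary : Matrix (Fin d) (Fin d) ℂ)
          * star (hσ.1.eigenvectorUnitary : Matrix (Fin d) (Fin d) ℂ))
          * (hρ.1.eigenvectorUnitary : Matrix (Fin d) (Fin d) ℂ) := by noncomm_ring
      _ = 1 := by rw [UsU hσ.1, mul_one, sUU hρ.1]
  have hDds : Matrix.of (fun i j => Complex.normSq (W i j)) ∈ doublyStochastic ℝ (Fin d) :=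
    normSq_mem_doublyStochastic hWu1 hWu2
  -- per-permutation bound
  set K := ∑ j, Real.sqrt (p j) * Real.sqrt (q j) with hK
  have hanti : Antivary (fun j => Real.sqrt (p j)) (fun j => Real.sqrt (q j)) := by
    intro i j hlt
    have hij : i ≤ j := by
      by_contra hc
      push_neg at hc
      exact absurd (Real.sqrt_le_sqrt (hqm hc.le)) (not_le.2 hlt)
    exact Real.sqrt_le_sqrt (hpa hij)
  have hperm : ∀ π : Equiv.Perm (Fin d), K ≤ ∑ i, Real.sqrt (α i) * Real.sqrt (β (π i)) := by
    intro π
    set τ : Equiv.Perm (Fin d) := eα.trans (π.trans eβ.symm) with hτ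
    have e1 : ∑ i, Real.sqrt (α i) * Real.sqrt (β (π i))
        = ∑ j, Real.sqrt (p j) * Real.sqrt (q (τ j)) := by
      rw [← Equiv.sum_comp eα (fun i => Real.sqrt (α i) * Real.sqrt (β (π i)))]
      refine Finset.sum_congr rfl fun j _ => ?_
      congr 2
      rw [hq, hτ]
      simp [Equiv.trans_apply, Equiv.apply_symm_apply]
    rw [e1, hK]
    exact hanti.sum_mul_le_sum_mul_comp_perm (σ := τ)
  have step3 : K ≤ X.trace.re := by
    rw [step2]
    exact sum_sum_doublyStochastic_ge hDds hperm
  -- scalar bound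
  have step4 : (∑ j, Real.sqrt (p j)) * Real.exp ((1/2) * ∑ j, p j * Real.log (q j)) ≤ K :=
    scalar_bound p q hp0 hq0 hsump hpa hqm
  -- final algebra
  have hlogdiv : ∑ j, p j * Real.log (p j / q j)
      = ∑ j, p j * Real.log (p j) - ∑ j, p j * Real.log (q j) := by
    rw [← Finset.sum_sub_distrib]
    refine Finset.sum_congr rfl fun j _ => ?_
    rw [Real.log_div (ne_of_gt (hp0 j)) (ne_of_gt (hq0 j))]
    ring
  have hgoalsum : ∑ j : Fin d,
        (hρ.1.eigenvalues (Tuple.sort hρ.1.eigenvalues j.rev)) *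
          Real.log ((hρ.1.eigenvalues (Tuple.sort hρ.1.eigenvalues j.rev)) /
            (hσ.1.eigenvalues (Tuple.sort hσ.1.eigenvalues j)))
      = ∑ j, p j * Real.log (p j / q j) := by
    refine Finset.sum_congr rfl fun j _ => ?_
    rw [hp, hq, heα, heβ]
    simp [Equiv.trans_apply]
    rfl
  rw [ge_iff_le, hgoalsum, hlogdiv, hvn, hS]
  have hexp : -(1 / 2 : ℝ) * (- ∑ j, p j * Real.log (p j)) -
      1 / 2 * ((∑ j, p j * Real.log (p j)) - ∑ j, p j * Real.log (q j))
      = (1/2) * ∑ j, p j * Real.log (q j) := by ring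
  rw [hexp]
  calc (∑ j, Real.sqrt (p j)) * Real.exp ((1/2) * ∑ j, p j * Real.log (q j))
      ≤ K := step4
    _ ≤ X.trace.re := step3
    _ ≤ traceNorm X := step1
    _ = fidelity ρ σ := rfl
end
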